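/- For interval-posets, the joint distribution of the statistics (trees, ir) is symmetric: for all n, a, b, the number of interval-posets of size n with trees(I) = a and ir(I) = b equals the number with trees(I) = b and ir(I) = a. -/
import Mathlib


/-- An interval-poset: a partial order on `{1,…,n}` such that for `a < b < c`,
`a ≺ c` implies `b ≺ c` and `c ≺ a` implies `b ≺ a`. -/
structure IPoset where
  n : ℕ
  rel : ℕ → ℕ → Prop
  supp : ∀ ⦃a b⦄, rel a b → 1 ≤ a ∧ a ≤ n ∧ 1 ≤ b ∧ b ≤ n
  refl : ∀ a, 1 ≤ a → a ≤ n → rel a a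
  antisymm : ∀ ⦃a b⦄, rel a b → rel b a → a = b
  trans : ∀ ⦃a b c⦄, rel a b → rel b c → rel a c
  inc : ∀ ⦃a b c⦄, a < b → b < c → rel a c → rel b c
  dec : ∀ ⦃a b c⦄, a < b → b < c → rel c a → rel b a

open scoped Classical in
/-- The initial rise `ir I`: the largest `k ≤ n` such that no relation
`i-1 ≺ i` holds for `2 ≤ i ≤ k`. -/
noncomputable def ir (I : IPoset) : ℕ :=
  Nat.findGreatest (fun k => ∀ i, 2 ≤ i → i ≤ k → ¬ I.rel (i - 1) i) I.n

/-- `x` is a root of the final forest (the forest of decreasing relations) of `I`. -/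
def IsDecRoot (I : IPoset) (x : ℕ) : Prop :=
  1 ≤ x ∧ x ≤ I.n ∧ ∀ y, y < x → ¬ I.rel x y

/-- `trees I`: the number of connected components of the final forest of `I`,
i.e. the number of its roots. -/
noncomputable def trees (I : IPoset) : ℕ := Set.ncard {x | IsDecRoot I x}


-- ===== new material =====
open scoped Classical

theorem IPoset.ext' {I J : IPoset} (hn : I.n = J.n)
    (h : ∀ x y, I.rel x y ↔ J.rel x y) : I = J := by
  obtain ⟨n1, r1, _, _, _, _, _, _⟩ := I
  obtain ⟨n2, r2, _, _, _, _, _, _⟩ := J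
  subst hn
  have : r1 = r2 := by
    funext x y
    exact propext (h x y)
  subst this
  rfl

def IsIncRoot (I : IPoset) (x : ℕ) : Prop :=
  1 ≤ x ∧ x ≤ I.n ∧ ∀ y, x < y → ¬ I.rel x y

noncomputable def drootsF (I : IPoset) : Finset ℕ :=
  (Finset.Icc 1 I.n).filter (fun x => IsDecRoot I x)

noncomputable def irootsF (I : IPoset) : Finset ℕ :=
  (Finset.Icc 1 I.n).filter (fun x => IsIncRoot I x)

lemma mem_drootsF {I : IPoset} {x : ℕ} : x ∈ drootsF I ↔ IsDecRoot I x := by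
  simp only [drootsF, Finset.mem_filter, Finset.mem_Icc]
  exact ⟨fun h => h.2, fun h => ⟨⟨h.1, h.2.1⟩, h⟩⟩

lemma mem_irootsF {I : IPoset} {x : ℕ} : x ∈ irootsF I ↔ IsIncRoot I x := by
  simp only [irootsF, Finset.mem_filter, Finset.mem_Icc]
  exact ⟨fun h => h.2, fun h => ⟨⟨h.1, h.2.1⟩, h⟩⟩

lemma decRootSet_eq (I : IPoset) : {x | IsDecRoot I x} = ↑(drootsF I) := by
  ext x; simp [mem_drootsF]

lemma trees_eq_card (I : IPoset) : trees I = (drootsF I).card := by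
  rw [trees, decRootSet_eq, Set.ncard_coe_finset]

noncomputable def itrees (I : IPoset) : ℕ := (irootsF I).card

lemma dleSet_eq (I : IPoset) (s : ℕ) :
    {z | IsDecRoot I z ∧ z ≤ s} = ↑((drootsF I).filter (· ≤ s)) := by
  ext x; simp [mem_drootsF]

lemma dle_ncard (I : IPoset) (s : ℕ) :
    Set.ncard {z | IsDecRoot I z ∧ z ≤ s} = ((drootsF I).filter (· ≤ s)).card := by
  rw [dleSet_eq, Set.ncard_coe_finset]

lemma ileSet_ncard (I : IPoset) (u : ℕ) :
    Set.ncard {z | IsIncRoot I z ∧ u ≤ z} = ((irootsF I).filter (u ≤ ·)).card := by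
  rw [show {z | IsIncRoot I z ∧ u ≤ z} = ↑((irootsF I).filter (u ≤ ·)) by
    ext x; simp [mem_irootsF]]
  exact Set.ncard_coe_finset _
-- counting lemmas
open scoped Classical

lemma count_filter_le_aux :
    ∀ (k : ℕ) (R : Finset ℕ), R.card = k → ∀ r ≤ k,
      (R.filter (fun s => (R.filter (· ≤ s)).card ≤ r)).card = r := by
  intro k
  induction k with
  | zero =>
    intro R hR r hr
    interval_cases r
    rw [Finset.card_eq_zero] at hR
    subst hR; simp
  | succ m ih =>
    intro R hR r hr
    have hne : R.Nonempty := by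
      rw [← Finset.card_pos, hR]; omega
    rcases eq_or_lt_of_le hr with heq | hlt
    · -- r = k : every element satisfies the filter
      subst heq
      rw [Finset.filter_true_of_mem, hR]
      intro s _hs
      calc (R.filter (· ≤ s)).card ≤ R.card := Finset.card_filter_le _ _
        _ = m + 1 := hR
    · -- r < k : remove the max
      set M := R.max' hne with hM
      have hMR : M ∈ R := R.max'_mem hne
      set R' := R.erase M with hR'
      have hcard' : R'.card = m := by
        rw [hR', Finset.card_erase_of_mem hMR, hR]; omega
      have hsub : ∀ s ∈ R', R.filter (· ≤ s) = R'.filter (· ≤ s) := by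
        intro s hs
        ext z
        simp only [hR', Finset.mem_filter, Finset.mem_erase]
        constructor
        · rintro ⟨hz, hzs⟩
          refine ⟨⟨?_, hz⟩, hzs⟩
          rintro rfl
          have hsM : s ≤ M := R.le_max' s (Finset.mem_of_mem_erase hs)
          have : s = M := le_antisymm hsM hzs
          exact (Finset.mem_erase.mp hs).1 this
        · rintro ⟨⟨_, hz⟩, hzs⟩; exact ⟨hz, hzs⟩
      have hMbig : ¬ (R.filter (· ≤ M)).card ≤ r := by
        have : R.filter (· ≤ M) = R := by
          apply Finset.filter_true_of_mem
          intro z hz; exact R.le_max' z hz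
        rw [this, hR]; omega
      have key : R.filter (fun s => (R.filter (· ≤ s)).card ≤ r)
          = R'.filter (fun s => (R'.filter (· ≤ s)).card ≤ r) := by
        ext s
        simp only [Finset.mem_filter]
        constructor
        · rintro ⟨hs, hc⟩
          have hsM : s ≠ M := by rintro rfl; exact hMbig hc
          have hs' : s ∈ R' := Finset.mem_erase.mpr ⟨hsM, hs⟩
          refine ⟨hs', ?_⟩
          rw [← hsub s hs']; exact hc
        · rintro ⟨hs, hc⟩
          refine ⟨Finset.mem_of_mem_erase hs, ?_⟩
          rw [hsub s hs]; exact hc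
      rw [key]
      exact ih R' hcard' r (by omega)

lemma count_filter_le (R : Finset ℕ) (r : ℕ) (hr : r ≤ R.card) :
    (R.filter (fun s => (R.filter (· ≤ s)).card ≤ r)).card = r :=
  count_filter_le_aux R.card R rfl r hr

lemma count_filter_ge_aux :
    ∀ (k : ℕ) (R : Finset ℕ), R.card = k → ∀ r ≤ k,
      (R.filter (fun s => (R.filter (s ≤ ·)).card ≤ r)).card = r := by
  intro k
  induction k with
  | zero =>
    intro R hR r hr
    interval_cases r
    rw [Finset.card_eq_zero] at hR
    subst hR; simp
  | succ m ih =>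
    intro R hR r hr
    have hne : R.Nonempty := by
      rw [← Finset.card_pos, hR]; omega
    rcases eq_or_lt_of_le hr with heq | hlt
    · subst heq
      rw [Finset.filter_true_of_mem, hR]
      intro s _hs
      calc (R.filter (s ≤ ·)).card ≤ R.card := Finset.card_filter_le _ _
        _ = m + 1 := hR
    · set M := R.min' hne with hM
      have hMR : M ∈ R := R.min'_mem hne
      set R' := R.erase M with hR'
      have hcard' : R'.card = m := by
        rw [hR', Finset.card_erase_of_mem hMR, hR]; omega
      have hsub : ∀ s ∈ R', R.filter (s ≤ ·) = R'.filter (s ≤ ·) := by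
        intro s hs
        ext z
        simp only [hR', Finset.mem_filter, Finset.mem_erase]
        constructor
        · rintro ⟨hz, hzs⟩
          refine ⟨⟨?_, hz⟩, hzs⟩
          rintro rfl
          have hsM : M ≤ s := R.min'_le s (Finset.mem_of_mem_erase hs)
          have : s = M := le_antisymm hzs hsM
          exact (Finset.mem_erase.mp hs).1 this
        · rintro ⟨⟨_, hz⟩, hzs⟩; exact ⟨hz, hzs⟩
      have hMbig : ¬ (R.filter (M ≤ ·)).card ≤ r := by
        have : R.filter (M ≤ ·) = R := by
          apply Finset.filter_true_of_mem
          intro z hz; exact R.min'_le z hz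
        rw [this, hR]; omega
      have key : R.filter (fun s => (R.filter (s ≤ ·)).card ≤ r)
          = R'.filter (fun s => (R'.filter (s ≤ ·)).card ≤ r) := by
        ext s
        simp only [Finset.mem_filter]
        constructor
        · rintro ⟨hs, hc⟩
          have hsM : s ≠ M := by rintro rfl; exact hMbig hc
          have hs' : s ∈ R' := Finset.mem_erase.mpr ⟨hsM, hs⟩
          refine ⟨hs', ?_⟩
          rw [← hsub s hs']; exact hc
        · rintro ⟨hs, hc⟩
          refine ⟨Finset.mem_of_mem_erase hs, ?_⟩
          rw [hsub s hs]; exact hc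
      rw [key]
      exact ih R' hcard' r (by omega)

lemma count_filter_ge (R : Finset ℕ) (r : ℕ) (hr : r ≤ R.card) :
    (R.filter (fun s => (R.filter (s ≤ ·)).card ≤ r)).card = r :=
  count_filter_ge_aux R.card R rfl r hr

/-- downward closed subset membership criterion -/
lemma mem_of_downclosed {T A : Finset ℕ} (hAT : A ⊆ T)
    (hdc : ∀ s' ∈ T, ∀ s ∈ A, s' ≤ s → s' ∈ A) {s : ℕ} (hs : s ∈ T) :
    (s ∈ A ↔ (T.filter (· ≤ s)).card ≤ A.card) := by
  constructor
  · intro hsA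
    apply Finset.card_le_card
    intro z hz
    rw [Finset.mem_filter] at hz
    exact hdc z hz.1 s hsA hz.2
  · intro hc
    by_contra hsA
    have hsubA : A ⊆ T.filter (fun z => z ≤ s ∧ z ≠ s) := by
      intro a ha
      rw [Finset.mem_filter]
      refine ⟨hAT ha, ?_, ?_⟩
      · by_contra hle
        exact hsA (hdc s hs a ha (by omega))
      · rintro rfl; exact hsA ha
    have h1 : A.card ≤ (T.filter (fun z => z ≤ s ∧ z ≠ s)).card :=
      Finset.card_le_card hsubA
    have h2 : (T.filter (fun z => z ≤ s ∧ z ≠ s)).card < (T.filter (· ≤ s)).card := by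
      apply Finset.card_lt_card
      constructor
      · intro z hz
        rw [Finset.mem_filter] at hz ⊢
        exact ⟨hz.1, hz.2.1⟩
      · intro hcon
        have := hcon (Finset.mem_filter.mpr ⟨hs, le_refl s⟩)
        rw [Finset.mem_filter] at this
        exact this.2.2 rfl
    omega

lemma mem_of_upclosed {T A : Finset ℕ} (hAT : A ⊆ T)
    (hdc : ∀ s' ∈ T, ∀ s ∈ A, s ≤ s' → s' ∈ A) {s : ℕ} (hs : s ∈ T) :
    (s ∈ A ↔ (T.filter (s ≤ ·)).card ≤ A.card) := by
  constructor
  · intro hsA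
    apply Finset.card_le_card
    intro z hz
    rw [Finset.mem_filter] at hz
    exact hdc z hz.1 s hsA hz.2
  · intro hc
    by_contra hsA
    have hsubA : A ⊆ T.filter (fun z => s ≤ z ∧ z ≠ s) := by
      intro a ha
      rw [Finset.mem_filter]
      refine ⟨hAT ha, ?_, ?_⟩
      · by_contra hle
        exact hsA (hdc s hs a ha (by omega))
      · rintro rfl; exact hsA ha
    have h1 : A.card ≤ (T.filter (fun z => s ≤ z ∧ z ≠ s)).card :=
      Finset.card_le_card hsubA
    have h2 : (T.filter (fun z => s ≤ z ∧ z ≠ s)).card < (T.filter (s ≤ ·)).card := by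
      apply Finset.card_lt_card
      constructor
      · intro z hz
        rw [Finset.mem_filter] at hz ⊢
        exact ⟨hz.1, hz.2.1⟩
      · intro hcon
        have := hcon (Finset.mem_filter.mpr ⟨hs, le_refl s⟩)
        rw [Finset.mem_filter] at this
        exact this.2.2 rfl
    omega
-- ===== min / max roots =====

lemma rel_bounds {I : IPoset} {x y : ℕ} (h : I.rel x y) :
    1 ≤ x ∧ x ≤ I.n ∧ 1 ≤ y ∧ y ≤ I.n := I.supp h

/-- the decreasing-forest root of an element: the least element it relates to -/
lemma exists_decRootOf (I : IPoset) {x : ℕ} (h1 : 1 ≤ x) (h2 : x ≤ I.n) :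
    ∃ u, IsDecRoot I u ∧ I.rel x u ∧ u ≤ x ∧ ∀ w, I.rel x w → u ≤ w := by
  classical
  have hx : I.rel x x := I.refl x h1 h2
  set F : Finset ℕ := (Finset.Icc 1 I.n).filter (fun w => I.rel x w) with hF
  have hxF : x ∈ F := by
    rw [hF, Finset.mem_filter, Finset.mem_Icc]; exact ⟨⟨h1, h2⟩, hx⟩
  have hne : F.Nonempty := ⟨x, hxF⟩
  set u := F.min' hne with hu
  have huF : u ∈ F := F.min'_mem hne
  rw [hF, Finset.mem_filter, Finset.mem_Icc] at huF
  have hmin : ∀ w, I.rel x w → u ≤ w := by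
    intro w hw
    apply F.min'_le
    rw [hF, Finset.mem_filter, Finset.mem_Icc]
    have := rel_bounds hw
    exact ⟨⟨this.2.2.1, this.2.2.2⟩, hw⟩
  refine ⟨u, ⟨huF.1.1, huF.1.2, ?_⟩, huF.2, hmin x hx, hmin⟩
  intro y hy hrel
  have : u ≤ y := hmin y (I.trans huF.2 hrel)
  omega

lemma exists_incRootOf (I : IPoset) {x : ℕ} (h1 : 1 ≤ x) (h2 : x ≤ I.n) :
    ∃ u, IsIncRoot I u ∧ I.rel x u ∧ x ≤ u ∧ ∀ w, I.rel x w → w ≤ u := by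
  classical
  have hx : I.rel x x := I.refl x h1 h2
  set F : Finset ℕ := (Finset.Icc 1 I.n).filter (fun w => I.rel x w) with hF
  have hxF : x ∈ F := by
    rw [hF, Finset.mem_filter, Finset.mem_Icc]; exact ⟨⟨h1, h2⟩, hx⟩
  have hne : F.Nonempty := ⟨x, hxF⟩
  set u := F.max' hne with hu
  have huF : u ∈ F := F.max'_mem hne
  rw [hF, Finset.mem_filter, Finset.mem_Icc] at huF
  have hmax : ∀ w, I.rel x w → w ≤ u := by
    intro w hw
    apply F.le_max'
    rw [hF, Finset.mem_filter, Finset.mem_Icc]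
    have := rel_bounds hw
    exact ⟨⟨this.2.2.1, this.2.2.2⟩, hw⟩
  refine ⟨u, ⟨huF.1.1, huF.1.2, ?_⟩, huF.2, hmax x hx, hmax⟩
  intro y hy hrel
  have : y ≤ u := hmax y (I.trans huF.2 hrel)
  omega

/-- the "package" appearing in clause 5 of the compositions (dec version) -/
def DecPkg (I : IPoset) (r : ℕ) (w : ℕ) : Prop :=
  ∃ s, IsDecRoot I s ∧ Set.ncard {z | IsDecRoot I z ∧ z ≤ s} ≤ r ∧
    (w = s ∨ (s < w ∧ I.rel w s))

def IncPkg (I : IPoset) (r : ℕ) (w : ℕ) : Prop :=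
  ∃ u, IsIncRoot I u ∧ Set.ncard {z | IsIncRoot I z ∧ u ≤ z} ≤ r ∧
    (w = u ∨ (w < u ∧ I.rel w u))

lemma DecPkg.bounds {I : IPoset} {r w : ℕ} (h : DecPkg I r w) : 1 ≤ w ∧ w ≤ I.n := by
  obtain ⟨s, hs, _, hw⟩ := h
  rcases hw with rfl | ⟨_, hrel⟩
  · exact ⟨hs.1, hs.2.1⟩
  · have := rel_bounds hrel; exact ⟨this.1, this.2.1⟩

lemma IncPkg.bounds {I : IPoset} {r w : ℕ} (h : IncPkg I r w) : 1 ≤ w ∧ w ≤ I.n := by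
  obtain ⟨s, hs, _, hw⟩ := h
  rcases hw with rfl | ⟨_, hrel⟩
  · exact ⟨hs.1, hs.2.1⟩
  · have := rel_bounds hrel; exact ⟨this.1, this.2.1⟩

lemma DecPkg.rel_root {I : IPoset} {r w : ℕ} (h : DecPkg I r w) :
    ∃ s, IsDecRoot I s ∧ Set.ncard {z | IsDecRoot I z ∧ z ≤ s} ≤ r ∧ s ≤ w ∧ I.rel w s := by
  obtain ⟨s, hs, hc, hw⟩ := h
  rcases hw with rfl | ⟨hlt, hrel⟩
  · exact ⟨w, hs, hc, le_refl _, I.refl w hs.1 hs.2.1⟩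
  · exact ⟨s, hs, hc, le_of_lt hlt, hrel⟩

lemma IncPkg.rel_root {I : IPoset} {r w : ℕ} (h : IncPkg I r w) :
    ∃ u, IsIncRoot I u ∧ Set.ncard {z | IsIncRoot I z ∧ u ≤ z} ≤ r ∧ w ≤ u ∧ I.rel w u := by
  obtain ⟨s, hs, hc, hw⟩ := h
  rcases hw with rfl | ⟨hlt, hrel⟩
  · exact ⟨w, hs, hc, le_refl _, I.refl w hs.1 hs.2.1⟩
  · exact ⟨s, hs, hc, le_of_lt hlt, hrel⟩

lemma dcount_mono (I : IPoset) {s s' : ℕ} (h : s' ≤ s) :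
    Set.ncard {z | IsDecRoot I z ∧ z ≤ s'} ≤ Set.ncard {z | IsDecRoot I z ∧ z ≤ s} := by
  rw [dle_ncard, dle_ncard]
  apply Finset.card_le_card
  intro z hz
  rw [Finset.mem_filter] at hz ⊢
  exact ⟨hz.1, le_trans hz.2 h⟩

lemma icount_mono (I : IPoset) {s s' : ℕ} (h : s ≤ s') :
    Set.ncard {z | IsIncRoot I z ∧ s' ≤ z} ≤ Set.ncard {z | IsIncRoot I z ∧ s ≤ z} := by
  rw [ileSet_ncard, ileSet_ncard]
  apply Finset.card_le_card
  intro z hz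
  rw [Finset.mem_filter] at hz ⊢
  exact ⟨hz.1, le_trans h hz.2⟩

/-- transitivity transport for packages: if x relates to w and w has a package,
x has a package. -/
lemma DecPkg.of_rel {I : IPoset} {r x w : ℕ} (hxw : I.rel x w) (h : DecPkg I r w) :
    DecPkg I r x := by
  obtain ⟨s, hs, hc, hsle, hrel⟩ := h.rel_root
  have hxs : I.rel x s := I.trans hxw hrel
  have hb := rel_bounds hxs
  obtain ⟨u, hu, hurel, hule, humin⟩ := exists_decRootOf I hb.1 hb.2.1
  have hus : u ≤ s := humin s hxs
  refine ⟨u, hu, le_trans (dcount_mono I hus) hc, ?_⟩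
  rcases eq_or_lt_of_le (humin x (I.refl x hb.1 hb.2.1)) with heq | hlt
  · exact Or.inl heq.symm
  · exact Or.inr ⟨hlt, hurel⟩

lemma IncPkg.of_rel {I : IPoset} {r x w : ℕ} (hxw : I.rel x w) (h : IncPkg I r w) :
    IncPkg I r x := by
  obtain ⟨s, hs, hc, hsle, hrel⟩ := h.rel_root
  have hxs : I.rel x s := I.trans hxw hrel
  have hb := rel_bounds hxs
  obtain ⟨u, hu, hurel, hule, humax⟩ := exists_incRootOf I hb.1 hb.2.1
  have hus : s ≤ u := humax s hxs
  refine ⟨u, hu, le_trans (icount_mono I hus) hc, ?_⟩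
  rcases eq_or_lt_of_le (humax x (I.refl x hb.1 hb.2.1)) with heq | hlt
  · exact Or.inl heq
  · exact Or.inr ⟨hlt, hurel⟩

/-- downward transport: if c has a dec package and 1 ≤ b < c then b has one too. -/
lemma DecPkg.of_lt {I : IPoset} {r b c : ℕ} (h : DecPkg I r c) (h1 : 1 ≤ b) (hbc : b < c) :
    DecPkg I r b := by
  obtain ⟨s, hs, hc, hsle, hrel⟩ := h.rel_root
  have hbn : b ≤ I.n := by have := rel_bounds hrel; omega
  rcases lt_trichotomy b s with hlt | heq | hgt
  · obtain ⟨u, hu, hurel, hule, humin⟩ := exists_decRootOf I h1 hbn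
    refine ⟨u, hu, le_trans (dcount_mono I (le_trans hule (le_of_lt hlt))) hc, ?_⟩
    rcases eq_or_lt_of_le hule with heq | hlt'
    · exact Or.inl heq.symm
    · exact Or.inr ⟨hlt', hurel⟩
  · exact ⟨s, hs, hc, Or.inl heq⟩
  · refine ⟨s, hs, hc, Or.inr ⟨hgt, ?_⟩⟩
    exact I.dec hgt hbc hrel

lemma IncPkg.of_gt {I : IPoset} {r b c : ℕ} (h : IncPkg I r c) (hn : b ≤ I.n) (hbc : c < b) :
    IncPkg I r b := by
  obtain ⟨s, hs, hc, hsle, hrel⟩ := h.rel_root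
  have hb1 : 1 ≤ b := by have := rel_bounds hrel; omega
  rcases lt_trichotomy s b with hlt | heq | hgt
  · obtain ⟨u, hu, hurel, hule, humax⟩ := exists_incRootOf I hb1 hn
    refine ⟨u, hu, le_trans (icount_mono I (le_trans (le_of_lt hlt) hule)) hc, ?_⟩
    rcases eq_or_lt_of_le hule with heq | hlt'
    · exact Or.inl heq
    · exact Or.inr ⟨hlt', hurel⟩
  · exact ⟨s, hs, hc, Or.inl heq.symm⟩
  · refine ⟨s, hs, hc, Or.inr ⟨hgt, ?_⟩⟩
    exact I.inc hbc hgt hrel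

/-- for a root itself, the package is equivalent to the count condition -/
lemma decPkg_root_iff {I : IPoset} {r s : ℕ} (hs : IsDecRoot I s) :
    DecPkg I r s ↔ Set.ncard {z | IsDecRoot I z ∧ z ≤ s} ≤ r := by
  constructor
  · rintro ⟨u, hu, hc, hw⟩
    rcases hw with rfl | ⟨hlt, hrel⟩
    · exact hc
    · exact absurd hrel (hs.2.2 u hlt)
  · intro hc
    exact ⟨s, hs, hc, Or.inl rfl⟩

lemma incPkg_root_iff {I : IPoset} {r s : ℕ} (hs : IsIncRoot I s) :
    IncPkg I r s ↔ Set.ncard {z | IsIncRoot I z ∧ s ≤ z} ≤ r := by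
  constructor
  · rintro ⟨u, hu, hc, hw⟩
    rcases hw with rfl | ⟨hlt, hrel⟩
    · exact hc
    · exact absurd hrel (hs.2.2 u hlt)
  · intro hc
    exact ⟨s, hs, hc, Or.inl rfl⟩
-- ===== ir lemmas =====

def irP (I : IPoset) (k : ℕ) : Prop := ∀ i, 2 ≤ i → i ≤ k → ¬ I.rel (i - 1) i

lemma irP_zero (I : IPoset) : irP I 0 := by intro i h1 h2; omega
lemma irP_one (I : IPoset) : irP I 1 := by intro i h1 h2; omega

lemma irP_mono {I : IPoset} {j k : ℕ} (h : irP I k) (hjk : j ≤ k) : irP I j :=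
  fun i h1 h2 => h i h1 (le_trans h2 hjk)

lemma ir_eq_iff (I : IPoset) (k : ℕ) :
    ir I = k ↔ k ≤ I.n ∧ irP I k ∧ (k < I.n → ¬ irP I (k + 1)) := by
  rw [ir, Nat.findGreatest_eq_iff]
  constructor
  · rintro ⟨hk, h2, h3⟩
    refine ⟨hk, ?_, ?_⟩
    · rcases Nat.eq_zero_or_pos k with rfl | hpos
      · exact irP_zero I
      · exact h2 (by omega)
    · intro hlt hP
      exact h3 (by omega) (by omega) hP
  · rintro ⟨hk, h2, h3⟩
    refine ⟨hk, fun _ => h2, ?_⟩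
    intro m hm hmn hP
    rcases Nat.lt_or_ge k I.n with hlt | hge
    · exact h3 hlt (irP_mono hP (by omega))
    · omega

lemma irP_ir (I : IPoset) : irP I (ir I) := ((ir_eq_iff I (ir I)).mp rfl).2.1

lemma ir_le (I : IPoset) : ir I ≤ I.n := ((ir_eq_iff I (ir I)).mp rfl).1

lemma one_le_ir {I : IPoset} (h : 1 ≤ I.n) : 1 ≤ ir I :=
  Nat.le_findGreatest h (fun i h1 h2 => by omega)

lemma ir_break {I : IPoset} (h : ir I < I.n) : I.rel (ir I) (ir I + 1) := by
  have h3 := ((ir_eq_iff I (ir I)).mp rfl).2.2 h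
  by_contra hrel
  apply h3
  intro i h1 h2
  rcases Nat.lt_or_ge i (ir I + 1) with hlt | hge
  · exact irP_ir I i h1 (by omega)
  · have : i = ir I + 1 := by omega
    subst this
    simpa using hrel

/-- characterization used to compute ir of compositions -/
lemma ir_eq_of (I : IPoset) (k : ℕ) (hk : k ≤ I.n) (h1 : irP I k)
    (h2 : k = I.n ∨ I.rel k (k + 1)) : ir I = k := by
  rw [ir_eq_iff]
  refine ⟨hk, h1, ?_⟩
  intro hlt hP
  rcases h2 with rfl | hrel
  · omega
  · have hb := rel_bounds hrel
    exact hP (k + 1) (by omega) (le_refl _) (by simpa using hrel)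

lemma ir_zero {I : IPoset} (h : I.n = 0) : ir I = 0 := by
  have := ir_le I; omega

-- ===== mirror =====

def IPoset.mirror (I : IPoset) : IPoset where
  n := I.n
  rel x y := 1 ≤ x ∧ x ≤ I.n ∧ 1 ≤ y ∧ y ≤ I.n ∧ I.rel (I.n + 1 - x) (I.n + 1 - y)
  supp a b h := ⟨h.1, h.2.1, h.2.2.1, h.2.2.2.1⟩
  refl a h1 h2 := ⟨h1, h2, h1, h2, I.refl _ (by omega) (by omega)⟩
  antisymm a b h h' := by
    have := I.antisymm h.2.2.2.2 h'.2.2.2.2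
    omega
  trans a b c h h' := ⟨h.1, h.2.1, h'.2.2.1, h'.2.2.2.1, I.trans h.2.2.2.2 h'.2.2.2.2⟩
  inc a b c hab hbc h := by
    refine ⟨by omega, by omega, h.2.2.1, h.2.2.2.1, ?_⟩
    exact I.dec (by omega) (by omega) h.2.2.2.2
  dec a b c hab hbc h := by
    refine ⟨by omega, by omega, h.2.2.1, h.2.2.2.1, ?_⟩
    exact I.inc (by omega) (by omega) h.2.2.2.2

@[simp] lemma mirror_n (I : IPoset) : (I.mirror).n = I.n := rfl

lemma mirror_rel_iff {I : IPoset} {x y : ℕ} (hx1 : 1 ≤ x) (hx2 : x ≤ I.n)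
    (hy1 : 1 ≤ y) (hy2 : y ≤ I.n) :
    (I.mirror).rel x y ↔ I.rel (I.n + 1 - x) (I.n + 1 - y) := by
  constructor
  · intro h; exact h.2.2.2.2
  · intro h; exact ⟨hx1, hx2, hy1, hy2, h⟩

lemma mirror_mirror (I : IPoset) : I.mirror.mirror = I := by
  refine IPoset.ext' rfl ?_
  intro x y
  simp only [IPoset.mirror, mirror_n]
  constructor
  · rintro ⟨h1, h2, h3, h4, _, _, _, _, h5⟩
    have e1 : I.n + 1 - (I.n + 1 - x) = x := by omega
    have e2 : I.n + 1 - (I.n + 1 - y) = y := by omega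
    rwa [e1, e2] at h5
  · intro h
    obtain ⟨hx1, hx2, hy1, hy2⟩ := rel_bounds h
    have e1 : I.n + 1 - (I.n + 1 - x) = x := by omega
    have e2 : I.n + 1 - (I.n + 1 - y) = y := by omega
    exact ⟨hx1, hx2, hy1, hy2, by omega, by omega, by omega, by omega,
      by rw [e1, e2]; exact h⟩

lemma isDecRoot_mirror_iff {I : IPoset} {x : ℕ} :
    IsDecRoot I.mirror x ↔ IsIncRoot I (I.n + 1 - x) ∧ 1 ≤ x ∧ x ≤ I.n := by
  constructor
  · rintro ⟨h1, h2, h3⟩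
    rw [mirror_n] at h2
    refine ⟨⟨by omega, by omega, ?_⟩, h1, h2⟩
    intro y hy hrel
    have hyb := rel_bounds hrel
    have hylt : I.n + 1 - y < x := by omega
    exact h3 (I.n + 1 - y) hylt
      ⟨by omega, by omega, by omega, by omega, by
        have e : I.n + 1 - (I.n + 1 - y) = y := by omega
        rw [e]; exact hrel⟩
  · rintro ⟨⟨h1, h2, h3⟩, hx1, hx2⟩
    refine ⟨hx1, by rw [mirror_n]; exact hx2, ?_⟩
    intro y hy hrel
    obtain ⟨hy1, hy2, _, _, hrel'⟩ := hrel
    exact h3 (I.n + 1 - y) (by omega) hrel'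

lemma isIncRoot_mirror_iff {I : IPoset} {x : ℕ} :
    IsIncRoot I.mirror x ↔ IsDecRoot I (I.n + 1 - x) ∧ 1 ≤ x ∧ x ≤ I.n := by
  constructor
  · rintro ⟨h1, h2, h3⟩
    rw [mirror_n] at h2
    refine ⟨⟨by omega, by omega, ?_⟩, h1, h2⟩
    intro y hy hrel
    have hyb := rel_bounds hrel
    have hygt : x < I.n + 1 - y := by omega
    exact h3 (I.n + 1 - y) hygt
      ⟨by omega, by omega, by omega, by omega, by
        have e : I.n + 1 - (I.n + 1 - y) = y := by omega
        rw [e]; exact hrel⟩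
  · rintro ⟨⟨h1, h2, h3⟩, hx1, hx2⟩
    refine ⟨hx1, by rw [mirror_n]; exact hx2, ?_⟩
    intro y hy hrel
    obtain ⟨hy1, hy2, _, _, hrel'⟩ := hrel
    exact h3 (I.n + 1 - y) (by omega) hrel'

lemma trees_mirror (I : IPoset) : trees I.mirror = itrees I := by
  rw [trees_eq_card, itrees]
  apply Finset.card_bij (fun x _ => I.n + 1 - x)
  · intro x hx
    rw [mem_drootsF] at hx
    rw [mem_irootsF]
    exact (isDecRoot_mirror_iff.mp hx).1
  · intro x hx y hy hxy
    rw [mem_drootsF] at hx hy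
    have hx' := isDecRoot_mirror_iff.mp hx
    have hy' := isDecRoot_mirror_iff.mp hy
    omega
  · intro y hy
    rw [mem_irootsF] at hy
    obtain ⟨hy1, hy2, hy3⟩ := hy
    refine ⟨I.n + 1 - y, ?_, by omega⟩
    rw [mem_drootsF, isDecRoot_mirror_iff]
    have e : I.n + 1 - (I.n + 1 - y) = y := by omega
    rw [e]
    exact ⟨⟨hy1, hy2, hy3⟩, by omega, by omega⟩

lemma itrees_mirror (I : IPoset) : itrees I.mirror = trees I := by
  rw [trees_eq_card, itrees]
  apply Finset.card_bij (fun x _ => I.n + 1 - x)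
  · intro x hx
    rw [mem_irootsF] at hx
    rw [mem_drootsF]
    exact (isIncRoot_mirror_iff.mp hx).1
  · intro x hx y hy hxy
    rw [mem_irootsF] at hx hy
    have hx' := isIncRoot_mirror_iff.mp hx
    have hy' := isIncRoot_mirror_iff.mp hy
    omega
  · intro y hy
    rw [mem_drootsF] at hy
    obtain ⟨hy1, hy2, hy3⟩ := hy
    refine ⟨I.n + 1 - y, ?_, by omega⟩
    rw [mem_irootsF, isIncRoot_mirror_iff]
    have e : I.n + 1 - (I.n + 1 - y) = y := by omega
    rw [e]
    exact ⟨⟨hy1, hy2, hy3⟩, by omega, by omega⟩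
-- ===== the composition G : prepend a new minimal-position vertex =====

def Grel (I1 I2 : IPoset) (r : ℕ) (x y : ℕ) : Prop :=
  (x = 1 ∧ y = 1) ∨
  (2 ≤ x ∧ x ≤ I1.n + 1 ∧ 2 ≤ y ∧ y ≤ I1.n + 1 ∧ I1.rel (x - 1) (y - 1)) ∨
  (I1.n + 2 ≤ x ∧ I1.n + 2 ≤ y ∧ I2.rel (x - (I1.n + 1)) (y - (I1.n + 1))) ∨
  (y = 1 ∧ 2 ≤ x ∧ x ≤ I1.n + 1 ∧ DecPkg I1 r (x - 1)) ∨
  (1 ≤ x ∧ x ≤ I1.n + 1 ∧ I1.n + 2 ≤ y ∧ I2.rel 1 (y - (I1.n + 1)))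

def IPoset.G (I1 I2 : IPoset) (r : ℕ) : IPoset where
  n := I1.n + I2.n + 1
  rel := Grel I1 I2 r
  supp := by
    intro a b h
    rcases h with ⟨rfl, rfl⟩ | ⟨h1, h2, h3, h4, h5⟩ | ⟨h1, h2, h3⟩ |
      ⟨h1, h2, h3, h4⟩ | ⟨h1, h2, h3, h4⟩
    · omega
    · omega
    · have := rel_bounds h3; omega
    · omega
    · have := rel_bounds h4; omega
  refl := by
    intro a h1 h2
    rcases Nat.lt_or_ge a 2 with ha | ha
    · left; omega
    rcases Nat.lt_or_ge a (I1.n + 2) with hb | hb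
    · right; left
      refine ⟨ha, by omega, ha, by omega, I1.refl (a - 1) (by omega) (by omega)⟩
    · right; right; left
      exact ⟨hb, hb, I2.refl (a - (I1.n + 1)) (by omega) (by omega)⟩
  antisymm := by
    intro a b h h'
    rcases h with ⟨rfl, rfl⟩ | ⟨h1, h2, h3, h4, h5⟩ | ⟨h1, h2, h3⟩ |
      ⟨h1, h2, h3, h4⟩ | ⟨h1, h2, h3, h4⟩ <;>
    rcases h' with ⟨e1, e2⟩ | ⟨g1, g2, g3, g4, g5⟩ | ⟨g1, g2, g3⟩ |
      ⟨g1, g2, g3, g4⟩ | ⟨g1, g2, g3, g4⟩ <;>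
      try omega
    · have := I1.antisymm h5 g5; omega
    · have := I2.antisymm h3 g3
      have b1 := rel_bounds h3
      omega
  trans := by
    intro a b c h h'
    rcases h with ⟨rfl, rfl⟩ | ⟨h1, h2, h3, h4, h5⟩ | ⟨h1, h2, h3⟩ |
      ⟨h1, h2, h3, h4⟩ | ⟨h1, h2, h3, h4⟩ <;>
    rcases h' with ⟨e1, e2⟩ | ⟨g1, g2, g3, g4, g5⟩ | ⟨g1, g2, g3⟩ |
      ⟨g1, g2, g3, g4⟩ | ⟨g1, g2, g3, g4⟩ <;>
      try omega
    -- (1,1)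
    · left; exact ⟨rfl, e2⟩
    -- (1,5) : a = 1, b = 1, clause5 from b
    · right; right; right; right
      exact ⟨by omega, by omega, g3, g4⟩
    -- (2,2)
    · right; left
      exact ⟨h1, h2, g3, g4, I1.trans h5 g5⟩
    -- (2,4)
    · right; right; right; left
      exact ⟨g1, h1, h2, g4.of_rel h5⟩
    -- (2,5)
    · right; right; right; right
      exact ⟨by omega, h2, g3, g4⟩
    -- (3,3)
    · right; right; left
      exact ⟨h1, g2, I2.trans h3 g3⟩
    -- (4,1)
    · right; right; right; left
      exact ⟨e2, h2, h3, h4⟩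
    -- (4,5)
    · right; right; right; right
      exact ⟨by omega, h3, g3, g4⟩
    -- (5,3)
    · right; right; right; right
      exact ⟨h1, h2, g2, I2.trans h4 g3⟩
  inc := by
    intro a b c hab hbc h
    rcases h with ⟨rfl, rfl⟩ | ⟨h1, h2, h3, h4, h5⟩ | ⟨h1, h2, h3⟩ |
      ⟨h1, h2, h3, h4⟩ | ⟨h1, h2, h3, h4⟩
    · omega
    · right; left
      exact ⟨by omega, by omega, by omega, h4,
        I1.inc (by omega) (by omega) h5⟩
    · right; right; left
      have hb := rel_bounds h3
      exact ⟨by omega, h2, I2.inc (by omega) (by omega) h3⟩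
    · omega
    · rcases Nat.lt_or_ge b (I1.n + 2) with hblt | hbge
      · right; right; right; right
        exact ⟨by omega, by omega, h3, h4⟩
      · right; right; left
        refine ⟨hbge, by omega, ?_⟩
        rcases Nat.eq_or_lt_of_le hbge with heq | hlt
        · have : b - (I1.n + 1) = 1 := by omega
          rw [this]; exact h4
        · exact I2.inc (by omega) (by omega) h4
  dec := by
    intro a b c hab hbc h
    rcases h with ⟨rfl, rfl⟩ | ⟨h1, h2, h3, h4, h5⟩ | ⟨h1, h2, h3⟩ |
      ⟨h1, h2, h3, h4⟩ | ⟨h1, h2, h3, h4⟩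
    · omega
    · right; left
      exact ⟨by omega, by omega, h3, h4,
        I1.dec (by omega) (by omega) h5⟩
    · right; right; left
      exact ⟨by omega, h2, I2.dec (by omega) (by omega) h3⟩
    · right; right; right; left
      exact ⟨h1, by omega, by omega, h4.of_lt (by omega) (by omega)⟩
    · omega
-- ===== statistics of G =====

lemma G_n (I1 I2 : IPoset) (r : ℕ) : (I1.G I2 r).n = I1.n + I2.n + 1 := rfl

lemma ir_G (I1 I2 : IPoset) (r : ℕ) : ir (I1.G I2 r) = ir I1 + 1 := by
  have hle : ir I1 ≤ I1.n := ir_le I1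
  apply ir_eq_of
  · rw [G_n]; omega
  · intro i h2i hik hrel
    rcases hrel with ⟨e1, e2⟩ | ⟨h1, h2, h3, h4, h5⟩ | ⟨h1, h2, h3⟩ |
      ⟨h1, h2, h3, h4⟩ | ⟨h1, h2, h3, h4⟩
    · omega
    · exact irP_ir I1 (i - 1) (by omega) (by omega)
        (by have : i - 1 - 1 = i - 2 := by omega
            rw [this]
            have : i - 2 = i - 1 - 1 := by omega
            rw [this]; exact h5)
    · omega
    · omega
    · omega
  · rcases Nat.lt_or_ge (ir I1) I1.n with hlt | hge
    · right
      have h1 : 1 ≤ ir I1 := one_le_ir (by omega)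
      right; left
      have e1 : ir I1 + 1 - 1 = ir I1 := by omega
      have e2 : ir I1 + 1 + 1 - 1 = ir I1 + 1 := by omega
      exact ⟨by omega, by omega, by omega, by omega, by rw [e1, e2]; exact ir_break hlt⟩
    · -- ir I1 = I1.n
      have heq : ir I1 = I1.n := by omega
      rcases Nat.eq_zero_or_pos I2.n with hq | hq
      · left; rw [G_n]; omega
      · right
        right; right; right; right
        refine ⟨by omega, by omega, by omega, ?_⟩
        have : ir I1 + 1 + 1 - (I1.n + 1) = 1 := by omega
        rw [this]
        exact I2.refl 1 le_rfl hq

lemma isDecRoot_G_iff {I1 I2 : IPoset} {r x : ℕ} :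
    IsDecRoot (I1.G I2 r) x ↔
      x = 1 ∨
      (2 ≤ x ∧ x ≤ I1.n + 1 ∧ IsDecRoot I1 (x - 1) ∧ ¬ DecPkg I1 r (x - 1)) ∨
      (I1.n + 2 ≤ x ∧ x ≤ I1.n + I2.n + 1 ∧ IsDecRoot I2 (x - (I1.n + 1))) := by
  constructor
  · rintro ⟨hx1, hx2, hroot⟩
    rw [G_n] at hx2
    rcases Nat.lt_or_ge x 2 with h2 | h2
    · left; omega
    rcases Nat.lt_or_ge x (I1.n + 2) with hp | hp
    · right; left
      refine ⟨h2, by omega, ⟨by omega, by omega, ?_⟩, ?_⟩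
      · intro y hy hrel
        have hb := rel_bounds hrel
        apply hroot (y + 1) (by omega)
        right; left
        refine ⟨by omega, by omega, by omega, by omega, ?_⟩
        have : y + 1 - 1 = y := by omega
        rw [this]; exact hrel
      · intro hpkg
        apply hroot 1 (by omega)
        right; right; right; left
        exact ⟨rfl, h2, by omega, hpkg⟩
    · right; right
      refine ⟨hp, by omega, by omega, by omega, ?_⟩
      intro y hy hrel
      have hb := rel_bounds hrel
      apply hroot (y + (I1.n + 1)) (by omega)
      right; right; left
      refine ⟨hp, by omega, ?_⟩
      have : y + (I1.n + 1) - (I1.n + 1) = y := by omega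
      rw [this]; exact hrel
  · intro h
    rcases h with rfl | ⟨h2, hp, ⟨hr1, hr2, hroot⟩, hnpkg⟩ | ⟨hp, hn, hr1, hr2, hroot⟩
    · refine ⟨le_rfl, by rw [G_n]; omega, ?_⟩
      intro y hy hrel
      rcases hrel with ⟨e1, e2⟩ | ⟨g1, g2, g3, g4, g5⟩ | ⟨g1, g2, g3⟩ |
        ⟨g1, g2, g3, g4⟩ | ⟨g1, g2, g3, g4⟩ <;> omega
    · refine ⟨by omega, by rw [G_n]; omega, ?_⟩
      intro y hy hrel
      rcases hrel with ⟨e1, e2⟩ | ⟨g1, g2, g3, g4, g5⟩ | ⟨g1, g2, g3⟩ |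
        ⟨g1, g2, g3, g4⟩ | ⟨g1, g2, g3, g4⟩
      · omega
      · exact hroot (y - 1) (by omega) g5
      · omega
      · exact hnpkg g4
      · omega
    · refine ⟨by omega, by rw [G_n]; omega, ?_⟩
      intro y hy hrel
      rcases hrel with ⟨e1, e2⟩ | ⟨g1, g2, g3, g4, g5⟩ | ⟨g1, g2, g3⟩ |
        ⟨g1, g2, g3, g4⟩ | ⟨g1, g2, g3, g4⟩
      · omega
      · omega
      · exact hroot (y - (I1.n + 1)) (by omega) g3
      · omega
      · omega

lemma trees_G {I1 I2 : IPoset} {r : ℕ} (hr : r ≤ trees I1) :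
    trees (I1.G I2 r) = 1 + (trees I1 - r) + trees I2 := by
  classical
  rw [trees_eq_card, trees_eq_card, trees_eq_card]
  have hset : drootsF (I1.G I2 r) =
      {1} ∪ ((drootsF I1).filter (fun s => ¬ DecPkg I1 r s)).image (· + 1)
        ∪ (drootsF I2).image (· + (I1.n + 1)) := by
    ext x
    simp only [Finset.mem_union, Finset.mem_image, Finset.mem_filter,
      Finset.mem_singleton, mem_drootsF]
    rw [isDecRoot_G_iff]
    constructor
    · rintro (rfl | ⟨h2, hp, hroot, hnpkg⟩ | ⟨hp, hn, hroot⟩)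
      · left; left; rfl
      · left; right
        exact ⟨x - 1, ⟨hroot, hnpkg⟩, by omega⟩
      · right
        refine ⟨x - (I1.n + 1), hroot, by omega⟩
    · rintro ((rfl | ⟨s, ⟨hroot, hnpkg⟩, rfl⟩) | ⟨s, hroot, rfl⟩)
      · left; rfl
      · right; left
        have e : s + 1 - 1 = s := by omega
        rw [e]
        exact ⟨by have := hroot.1; omega, by have := hroot.2.1; omega, hroot, hnpkg⟩
      · right; right
        have e : s + (I1.n + 1) - (I1.n + 1) = s := by omega
        rw [e]
        exact ⟨by have := hroot.1; omega, by have := hroot.2.1; have := hroot.1; omega, hroot⟩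
  rw [hset]
  have hd1 : Disjoint ({1} ∪ ((drootsF I1).filter (fun s => ¬ DecPkg I1 r s)).image (· + 1))
      ((drootsF I2).image (· + (I1.n + 1))) := by
    rw [Finset.disjoint_left]
    intro a ha hb
    rcases Finset.mem_union.mp ha with h | h
    · rw [Finset.mem_singleton] at h
      obtain ⟨s, hs, rfl⟩ := Finset.mem_image.mp hb
      have := (mem_drootsF.mp hs).1
      omega
    · obtain ⟨s, hsm, rfl⟩ := Finset.mem_image.mp h
      obtain ⟨u, hu, he⟩ := Finset.mem_image.mp hb
      have h1 := (mem_drootsF.mp (Finset.mem_filter.mp hsm).1).2.1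
      have h2 := (mem_drootsF.mp hu).1
      omega
  have hd2 : Disjoint ({1} : Finset ℕ)
      (((drootsF I1).filter (fun s => ¬ DecPkg I1 r s)).image (· + 1)) := by
    rw [Finset.disjoint_left]
    intro a ha hb
    rw [Finset.mem_singleton] at ha
    obtain ⟨s, hs, he⟩ := Finset.mem_image.mp hb
    have := (mem_drootsF.mp (Finset.mem_filter.mp hs).1).1
    omega
  rw [Finset.card_union_of_disjoint hd1, Finset.card_union_of_disjoint hd2,
    Finset.card_singleton, Finset.card_image_of_injective _ (add_left_injective 1),
    Finset.card_image_of_injective _ (add_left_injective (I1.n + 1))]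
  have hfc : ((drootsF I1).filter (fun s => ¬ DecPkg I1 r s)).card
      = (drootsF I1).card - r := by
    have hsplit := Finset.card_filter_add_card_filter_not
      (s := drootsF I1) (p := fun s => DecPkg I1 r s)
    have hpos : ((drootsF I1).filter (fun s => DecPkg I1 r s)).card = r := by
      have : (drootsF I1).filter (fun s => DecPkg I1 r s)
          = (drootsF I1).filter (fun s => ((drootsF I1).filter (· ≤ s)).card ≤ r) := by
        apply Finset.filter_congr
        intro s hs
        rw [mem_drootsF] at hs
        rw [decPkg_root_iff hs, dle_ncard]
      rw [this]
      exact count_filter_le (drootsF I1) r (by rw [← trees_eq_card]; exact hr)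
    omega
  rw [hfc, ← trees_eq_card, ← trees_eq_card]
-- ===== the composition D : insert a new vertex absorbing the tail =====

def Drel (J1 J2 : IPoset) (s : ℕ) (x y : ℕ) : Prop :=
  (1 ≤ x ∧ x ≤ J1.n ∧ 1 ≤ y ∧ y ≤ J1.n ∧ J1.rel x y) ∨
  (J1.n + 1 < x ∧ J1.n + 1 < y ∧ J2.rel (x - (J1.n + 1)) (y - (J1.n + 1))) ∨
  (x = J1.n + 1 ∧ y = J1.n + 1) ∨
  (y = J1.n + 1 ∧ J1.n + 1 < x ∧ x ≤ J1.n + 1 + J2.n) ∨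
  (y = J1.n + 1 ∧ 1 ≤ x ∧ x ≤ J1.n ∧ IncPkg J1 s x)

def IPoset.D (J1 J2 : IPoset) (s : ℕ) : IPoset where
  n := J1.n + J2.n + 1
  rel := Drel J1 J2 s
  supp := by
    intro a b h
    rcases h with ⟨h1, h2, h3, h4, h5⟩ | ⟨h1, h2, h3⟩ | ⟨h1, h2⟩ |
      ⟨h1, h2, h3⟩ | ⟨h1, h2, h3, h4⟩
    · omega
    · have := rel_bounds h3; omega
    · omega
    · omega
    · omega
  refl := by
    intro a h1 h2
    rcases Nat.lt_or_ge a (J1.n + 1) with ha | ha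
    · left
      exact ⟨h1, by omega, h1, by omega, J1.refl a h1 (by omega)⟩
    rcases Nat.eq_or_lt_of_le ha with hb | hb
    · right; right; left; omega
    · right; left
      exact ⟨hb, hb, J2.refl (a - (J1.n + 1)) (by omega) (by omega)⟩
  antisymm := by
    intro a b h h'
    rcases h with ⟨h1, h2, h3, h4, h5⟩ | ⟨h1, h2, h3⟩ | ⟨h1, h2⟩ |
      ⟨h1, h2, h3⟩ | ⟨h1, h2, h3, h4⟩ <;>
    rcases h' with ⟨g1, g2, g3, g4, g5⟩ | ⟨g1, g2, g3⟩ | ⟨g1, g2⟩ |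
      ⟨g1, g2, g3⟩ | ⟨g1, g2, g3, g4⟩ <;>
      try omega
    · exact J1.antisymm h5 g5
    · have := J2.antisymm h3 g3; omega
  trans := by
    intro a b c h h'
    rcases h with ⟨h1, h2, h3, h4, h5⟩ | ⟨h1, h2, h3⟩ | ⟨h1, h2⟩ |
      ⟨h1, h2, h3⟩ | ⟨h1, h2, h3, h4⟩ <;>
    rcases h' with ⟨g1, g2, g3, g4, g5⟩ | ⟨g1, g2, g3⟩ | ⟨g1, g2⟩ |
      ⟨g1, g2, g3⟩ | ⟨g1, g2, g3, g4⟩ <;>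
      try omega
    -- (1,1)
    · left; exact ⟨h1, h2, g3, g4, J1.trans h5 g5⟩
    -- (1,5)
    · right; right; right; right
      exact ⟨g1, h1, h2, g4.of_rel h5⟩
    -- (2,2)
    · right; left; exact ⟨h1, g2, J2.trans h3 g3⟩
    -- (2,4)
    · right; right; right; left
      have := rel_bounds h3
      exact ⟨g1, h1, by omega⟩
    -- (3,3)
    · right; right; left; exact ⟨h1, g2⟩
    -- (4,3)
    · right; right; right; left
      exact ⟨g2, h2, h3⟩
    -- (5,3)
    · right; right; right; right
      exact ⟨g2, h2, h3, h4⟩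
  inc := by
    intro a b c hab hbc h
    rcases h with ⟨h1, h2, h3, h4, h5⟩ | ⟨h1, h2, h3⟩ | ⟨h1, h2⟩ |
      ⟨h1, h2, h3⟩ | ⟨h1, h2, h3, h4⟩
    · left
      exact ⟨by omega, by omega, h3, h4, J1.inc hab hbc h5⟩
    · right; left
      exact ⟨by omega, h2, J2.inc (by omega) (by omega) h3⟩
    · omega
    · omega
    · right; right; right; right
      exact ⟨h1, by omega, by omega, h4.of_gt (by omega) hab⟩
  dec := by
    intro a b c hab hbc h
    rcases h with ⟨h1, h2, h3, h4, h5⟩ | ⟨h1, h2, h3⟩ | ⟨h1, h2⟩ |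
      ⟨h1, h2, h3⟩ | ⟨h1, h2, h3, h4⟩
    · left
      exact ⟨by omega, by omega, h3, h4, J1.dec hab hbc h5⟩
    · right; left
      exact ⟨by omega, h2, J2.dec (by omega) (by omega) h3⟩
    · omega
    · right; right; right; left
      exact ⟨h1, by omega, by omega⟩
    · omega

lemma D_n (J1 J2 : IPoset) (s : ℕ) : (J1.D J2 s).n = J1.n + J2.n + 1 := rfl

-- ===== statistics of D =====

lemma isIncRoot_D_iff {J1 J2 : IPoset} {s x : ℕ} :
    IsIncRoot (J1.D J2 s) x ↔
      (1 ≤ x ∧ x ≤ J1.n ∧ IsIncRoot J1 x ∧ ¬ IncPkg J1 s x) ∨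
      x = J1.n + 1 ∨
      (J1.n + 1 < x ∧ x ≤ J1.n + J2.n + 1 ∧ IsIncRoot J2 (x - (J1.n + 1))) := by
  constructor
  · rintro ⟨hx1, hx2, hroot⟩
    rw [D_n] at hx2
    rcases Nat.lt_or_ge x (J1.n + 1) with hp | hp
    · left
      refine ⟨hx1, by omega, ⟨hx1, by omega, ?_⟩, ?_⟩
      · intro y hy hrel
        have hb := rel_bounds hrel
        exact hroot y hy (Or.inl ⟨hx1, by omega, by omega, by omega, hrel⟩)
      · intro hpkg
        apply hroot (J1.n + 1) (by omega)
        right; right; right; right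
        exact ⟨rfl, hx1, by omega, hpkg⟩
    rcases Nat.eq_or_lt_of_le hp with heq | hlt
    · right; left; omega
    · right; right
      refine ⟨hlt, by omega, by omega, by omega, ?_⟩
      intro y hy hrel
      have hb := rel_bounds hrel
      apply hroot (y + (J1.n + 1)) (by omega)
      right; left
      refine ⟨hlt, by omega, ?_⟩
      have e : y + (J1.n + 1) - (J1.n + 1) = y := by omega
      rw [e]; exact hrel
  · intro h
    rcases h with ⟨hx1, hxp, ⟨hr1, hr2, hroot⟩, hnpkg⟩ | rfl | ⟨hlt, hn, hr1, hr2, hroot⟩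
    · refine ⟨hx1, by rw [D_n]; omega, ?_⟩
      intro y hy hrel
      rcases hrel with ⟨g1, g2, g3, g4, g5⟩ | ⟨g1, g2, g3⟩ | ⟨g1, g2⟩ |
        ⟨g1, g2, g3⟩ | ⟨g1, g2, g3, g4⟩
      · exact hroot y hy g5
      · omega
      · omega
      · omega
      · exact hnpkg g4
    · refine ⟨by omega, by rw [D_n]; omega, ?_⟩
      intro y hy hrel
      rcases hrel with ⟨g1, g2, g3, g4, g5⟩ | ⟨g1, g2, g3⟩ | ⟨g1, g2⟩ |
        ⟨g1, g2, g3⟩ | ⟨g1, g2, g3, g4⟩ <;> omega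
    · refine ⟨by omega, by rw [D_n]; omega, ?_⟩
      intro y hy hrel
      rcases hrel with ⟨g1, g2, g3, g4, g5⟩ | ⟨g1, g2, g3⟩ | ⟨g1, g2⟩ |
        ⟨g1, g2, g3⟩ | ⟨g1, g2, g3, g4⟩
      · omega
      · exact hroot (y - (J1.n + 1)) (by omega) g3
      · omega
      · omega
      · omega

lemma isDecRoot_D_iff {J1 J2 : IPoset} {s x : ℕ} :
    IsDecRoot (J1.D J2 s) x ↔
      (1 ≤ x ∧ x ≤ J1.n ∧ IsDecRoot J1 x) ∨ x = J1.n + 1 := by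
  constructor
  · rintro ⟨hx1, hx2, hroot⟩
    rw [D_n] at hx2
    rcases Nat.lt_or_ge x (J1.n + 1) with hp | hp
    · left
      refine ⟨hx1, by omega, hx1, by omega, ?_⟩
      intro y hy hrel
      have hb := rel_bounds hrel
      exact hroot y hy (Or.inl ⟨by omega, by omega, by omega, by omega, hrel⟩)
    rcases Nat.eq_or_lt_of_le hp with heq | hlt
    · right; omega
    · exfalso
      apply hroot (J1.n + 1) (by omega)
      right; right; right; left
      exact ⟨rfl, hlt, by omega⟩
  · intro h
    rcases h with ⟨hx1, hxp, ⟨hr1, hr2, hroot⟩⟩ | rfl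
    · refine ⟨hx1, by rw [D_n]; omega, ?_⟩
      intro y hy hrel
      rcases hrel with ⟨g1, g2, g3, g4, g5⟩ | ⟨g1, g2, g3⟩ | ⟨g1, g2⟩ |
        ⟨g1, g2, g3⟩ | ⟨g1, g2, g3, g4⟩
      · exact hroot y hy g5
      · omega
      · omega
      · omega
      · omega
    · refine ⟨by omega, by rw [D_n]; omega, ?_⟩
      intro y hy hrel
      rcases hrel with ⟨g1, g2, g3, g4, g5⟩ | ⟨g1, g2, g3⟩ | ⟨g1, g2⟩ |
        ⟨g1, g2, g3⟩ | ⟨g1, g2, g3, g4⟩ <;> omega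

lemma itrees_D {J1 J2 : IPoset} {s : ℕ} (hs : s ≤ itrees J1) :
    itrees (J1.D J2 s) = itrees J1 + itrees J2 + 1 - s := by
  classical
  have hset : irootsF (J1.D J2 s) =
      ((irootsF J1).filter (fun u => ¬ IncPkg J1 s u))
        ∪ {J1.n + 1}
        ∪ (irootsF J2).image (· + (J1.n + 1)) := by
    ext x
    simp only [Finset.mem_union, Finset.mem_image, Finset.mem_filter,
      Finset.mem_singleton, mem_irootsF]
    rw [isIncRoot_D_iff]
    constructor
    · rintro (⟨h1, h2, hroot, hnpkg⟩ | rfl | ⟨hlt, hn, hroot⟩)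
      · left; left; exact ⟨hroot, hnpkg⟩
      · left; right; rfl
      · right; exact ⟨x - (J1.n + 1), hroot, by omega⟩
    · rintro ((⟨hroot, hnpkg⟩ | rfl) | ⟨u, hroot, rfl⟩)
      · left; exact ⟨hroot.1, hroot.2.1, hroot, hnpkg⟩
      · right; left; rfl
      · right; right
        have e : u + (J1.n + 1) - (J1.n + 1) = u := by omega
        rw [e]
        exact ⟨by have := hroot.1; omega, by have := hroot.2.1; omega, hroot⟩
  rw [itrees, hset]
  have hd2 : Disjoint ((irootsF J1).filter (fun u => ¬ IncPkg J1 s u)) ({J1.n + 1} : Finset ℕ) := by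
    rw [Finset.disjoint_right]
    intro a ha hb
    rw [Finset.mem_singleton] at ha
    have := (mem_irootsF.mp (Finset.mem_filter.mp hb).1).2.1
    omega
  have hd1 : Disjoint ((irootsF J1).filter (fun u => ¬ IncPkg J1 s u) ∪ {J1.n + 1})
      ((irootsF J2).image (· + (J1.n + 1))) := by
    rw [Finset.disjoint_left]
    intro a ha hb
    obtain ⟨u, hu, rfl⟩ := Finset.mem_image.mp hb
    have hu1 := (mem_irootsF.mp hu).1
    rcases Finset.mem_union.mp ha with h | h
    · have := (mem_irootsF.mp (Finset.mem_filter.mp h).1).2.1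
      omega
    · rw [Finset.mem_singleton] at h
      omega
  rw [Finset.card_union_of_disjoint hd1, Finset.card_union_of_disjoint hd2,
    Finset.card_singleton,
    Finset.card_image_of_injective _ (add_left_injective (J1.n + 1))]
  have hfc : ((irootsF J1).filter (fun u => ¬ IncPkg J1 s u)).card
      = (irootsF J1).card - s := by
    have hsplit := Finset.card_filter_add_card_filter_not
      (s := irootsF J1) (p := fun u => IncPkg J1 s u)
    have hpos : ((irootsF J1).filter (fun u => IncPkg J1 s u)).card = s := by
      have : (irootsF J1).filter (fun u => IncPkg J1 s u)
          = (irootsF J1).filter (fun u => ((irootsF J1).filter (u ≤ ·)).card ≤ s) := by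
        apply Finset.filter_congr
        intro u hu
        rw [mem_irootsF] at hu
        rw [incPkg_root_iff hu, ileSet_ncard]
      rw [this]
      exact count_filter_ge (irootsF J1) s hs
    omega
  rw [hfc]
  have h1 : s ≤ (irootsF J1).card := hs
  rw [itrees, itrees]
  omega

lemma trees_D (J1 J2 : IPoset) (s : ℕ) : trees (J1.D J2 s) = trees J1 + 1 := by
  classical
  rw [trees_eq_card, trees_eq_card]
  have hset : drootsF (J1.D J2 s) = drootsF J1 ∪ {J1.n + 1} := by
    ext x
    simp only [Finset.mem_union, Finset.mem_singleton, mem_drootsF]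
    rw [isDecRoot_D_iff]
    constructor
    · rintro (⟨h1, h2, hroot⟩ | rfl)
      · left; exact hroot
      · right; rfl
    · rintro (hroot | rfl)
      · left; exact ⟨hroot.1, hroot.2.1, hroot⟩
      · right; rfl
  rw [hset, Finset.card_union_of_disjoint]
  · rw [Finset.card_singleton]
  · rw [Finset.disjoint_right]
    intro a ha hb
    rw [Finset.mem_singleton] at ha
    have := (mem_drootsF.mp hb).2.1
    omega
-- ===== restriction =====

def IPoset.restrict (I : IPoset) (off len : ℕ) : IPoset where
  n := min len (I.n - off)
  rel a b := 1 ≤ a ∧ a ≤ len ∧ 1 ≤ b ∧ b ≤ len ∧ I.rel (a + off) (b + off)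
  supp := by
    intro a b h
    have := rel_bounds h.2.2.2.2
    omega
  refl := by
    intro a h1 h2
    exact ⟨h1, by omega, h1, by omega, I.refl (a + off) (by omega) (by omega)⟩
  antisymm := by
    intro a b h h'
    have := I.antisymm h.2.2.2.2 h'.2.2.2.2
    omega
  trans := by
    intro a b c h h'
    exact ⟨h.1, h.2.1, h'.2.2.1, h'.2.2.2.1, I.trans h.2.2.2.2 h'.2.2.2.2⟩
  inc := by
    intro a b c hab hbc h
    exact ⟨by omega, by omega, h.2.2.1, h.2.2.2.1,
      I.inc (by omega) (by omega) h.2.2.2.2⟩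
  dec := by
    intro a b c hab hbc h
    exact ⟨by omega, by omega, h.2.2.1, h.2.2.2.1,
      I.dec (by omega) (by omega) h.2.2.2.2⟩

lemma restrict_rel_iff {I : IPoset} {off len a b : ℕ} :
    (I.restrict off len).rel a b ↔
      (1 ≤ a ∧ a ≤ len ∧ 1 ≤ b ∧ b ≤ len ∧ I.rel (a + off) (b + off)) := Iff.rfl

lemma restrict_n {I : IPoset} {off len : ℕ} (h : off + len ≤ I.n) :
    (I.restrict off len).n = len := by
  show min len (I.n - off) = len
  omega

-- ===== G-decomposition =====

noncomputable def Gcset (I : IPoset) : Finset ℕ :=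
  @Finset.filter _ (fun y => ∀ x, 1 ≤ x → x < y → I.rel x y)
    (fun _ => Classical.propDecidable _) (Finset.Icc 2 I.n)

noncomputable def Gc (I : IPoset) : ℕ :=
  if h : (Gcset I).Nonempty then (Gcset I).min' h else I.n + 1

lemma mem_Gcset {I : IPoset} {y : ℕ} :
    y ∈ Gcset I ↔ (2 ≤ y ∧ y ≤ I.n ∧ ∀ x, 1 ≤ x → x < y → I.rel x y) := by
  unfold Gcset
  rw [@Finset.mem_filter _ _ (fun _ => Classical.propDecidable _), Finset.mem_Icc]
  tauto

lemma Gc_bounds {I : IPoset} (hn : 1 ≤ I.n) : 2 ≤ Gc I ∧ Gc I ≤ I.n + 1 := by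
  rw [Gc]
  split_ifs with h
  · have := mem_Gcset.mp ((Gcset I).min'_mem h)
    omega
  · omega

lemma Gc_rel {I : IPoset} (hc : Gc I ≤ I.n) :
    ∀ x, 1 ≤ x → x < Gc I → I.rel x (Gc I) := by
  rw [Gc] at hc ⊢
  split_ifs at hc ⊢ with h
  · have := mem_Gcset.mp ((Gcset I).min'_mem h)
    exact this.2.2
  · omega

lemma Gc_min {I : IPoset} {y : ℕ} (h2 : 2 ≤ y) (hlt : y < Gc I) (hyn : y ≤ I.n) :
    ∃ x, 1 ≤ x ∧ x < y ∧ ¬ I.rel x y := by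
  by_contra hcon
  push_neg at hcon
  have hmem : y ∈ Gcset I := by
    rw [mem_Gcset]
    exact ⟨h2, hyn, fun x h1 hx => hcon x h1 hx⟩
  rw [Gc] at hlt
  split_ifs at hlt with h
  · have := (Gcset I).min'_le y hmem
    omega
  · exact h ⟨y, hmem⟩

noncomputable def GI1 (I : IPoset) : IPoset := I.restrict 1 (Gc I - 2)
noncomputable def GI2 (I : IPoset) : IPoset := I.restrict (Gc I - 1) (I.n + 1 - Gc I)

open scoped Classical in
noncomputable def Gr (I : IPoset) : ℕ :=
  ((drootsF (GI1 I)).filter (fun u => I.rel (u + 1) 1)).card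

lemma GI1_n {I : IPoset} (hn : 1 ≤ I.n) : (GI1 I).n = Gc I - 2 := by
  have := Gc_bounds hn
  exact restrict_n (by omega)

lemma GI2_n {I : IPoset} (hn : 1 ≤ I.n) : (GI2 I).n = I.n + 1 - Gc I := by
  have := Gc_bounds hn
  exact restrict_n (by omega)

-- structural facts
lemma G_f1 {I : IPoset} {y : ℕ} (h2 : 2 ≤ y) (hlt : y < Gc I) (hyn : y ≤ I.n) :
    ¬ I.rel 1 y := by
  intro hrel
  obtain ⟨x, hx1, hxy, hnx⟩ := Gc_min h2 hlt hyn
  apply hnx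
  rcases Nat.eq_or_lt_of_le hx1 with heq | hgt
  · rw [← heq]; exact hrel
  · exact I.inc hgt hxy hrel

lemma G_f3 {I : IPoset} {y : ℕ} (hn : 1 ≤ I.n) (hy : Gc I ≤ y) (hyn : y ≤ I.n) :
    ¬ I.rel y 1 := by
  intro hrel
  have hc2 := (Gc_bounds hn).1
  have hrel1c : I.rel 1 (Gc I) := Gc_rel (by omega) 1 le_rfl (by omega)
  rcases Nat.eq_or_lt_of_le hy with heq | hgt
  · rw [heq] at hrel1c
    have := I.antisymm hrel hrel1c
    omega
  · have : I.rel (Gc I) 1 := I.dec (by omega) hgt hrel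
    have := I.antisymm this hrel1c
    omega

lemma G_f4 {I : IPoset} {x y : ℕ} (hn : 1 ≤ I.n) (hx2 : 2 ≤ x) (hxc : x < Gc I)
    (hy : Gc I ≤ y) (hyn : y ≤ I.n) : ¬ I.rel y x := by
  intro hrel
  have hrelxc : I.rel x (Gc I) := Gc_rel (by omega) x (by omega) hxc
  rcases Nat.eq_or_lt_of_le hy with heq | hgt
  · rw [heq] at hrelxc
    have := I.antisymm hrel hrelxc
    omega
  · have : I.rel (Gc I) x := I.dec hxc hgt hrel
    have := I.antisymm this hrelxc
    omega

lemma G_f5 {I : IPoset} {x y : ℕ} (hx1 : 1 ≤ x) (hxc : x < Gc I)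
    (hy : Gc I ≤ y) (hyn : y ≤ I.n) : I.rel x y ↔ I.rel (Gc I) y := by
  constructor
  · intro hrel
    rcases Nat.eq_or_lt_of_le hy with heq | hgt
    · rw [heq]
      exact I.refl y (by omega) hyn
    · exact I.inc hxc hgt hrel
  · intro hrel
    exact I.trans (Gc_rel (by omega) x hx1 hxc) hrel

lemma GI1_rel_iff {I : IPoset} {a b : ℕ} :
    (GI1 I).rel a b ↔ (1 ≤ a ∧ a ≤ Gc I - 2 ∧ 1 ≤ b ∧ b ≤ Gc I - 2 ∧ I.rel (a + 1) (b + 1)) :=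
  Iff.rfl

lemma GI2_rel_iff {I : IPoset} {a b : ℕ} :
    (GI2 I).rel a b ↔ (1 ≤ a ∧ a ≤ I.n + 1 - Gc I ∧ 1 ≤ b ∧ b ≤ I.n + 1 - Gc I ∧
      I.rel (a + (Gc I - 1)) (b + (Gc I - 1))) := Iff.rfl

/-- the set of roots of `GI1` whose tree relates to the bottom vertex is
downward closed, so membership is characterized by the count. -/
lemma G_f7 {I : IPoset} (hn : 1 ≤ I.n) {u : ℕ} (hu : IsDecRoot (GI1 I) u) :
    I.rel (u + 1) 1 ↔ Set.ncard {z | IsDecRoot (GI1 I) z ∧ z ≤ u} ≤ Gr I := by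
  classical
  have hdc : ∀ s' ∈ drootsF (GI1 I),
      ∀ s ∈ (drootsF (GI1 I)).filter (fun v => I.rel (v + 1) 1), s' ≤ s →
        s' ∈ (drootsF (GI1 I)).filter (fun v => I.rel (v + 1) 1) := by
    intro s' hs' s hs hle
    rw [Finset.mem_filter] at hs ⊢
    refine ⟨hs', ?_⟩
    rcases Nat.eq_or_lt_of_le hle with heq | hlt
    · rw [heq]; exact hs.2
    · exact I.dec (by have := (mem_drootsF.mp hs').1; omega) (by omega) hs.2
  have := mem_of_downclosed (Finset.filter_subset _ _) hdc (mem_drootsF.mpr hu)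
  rw [dle_ncard]
  constructor
  · intro hrel
    exact this.mp (Finset.mem_filter.mpr ⟨mem_drootsF.mpr hu, hrel⟩)
  · intro hc
    exact (Finset.mem_filter.mp (this.mpr hc)).2

lemma G_f6 {I : IPoset} (hn : 1 ≤ I.n) {x : ℕ} (hx2 : 2 ≤ x) (hxc : x < Gc I) :
    I.rel x 1 ↔ DecPkg (GI1 I) (Gr I) (x - 1) := by
  have hc := Gc_bounds hn
  have hn1 : (GI1 I).n = Gc I - 2 := GI1_n hn
  constructor
  · intro hrel
    have hx1' : 1 ≤ x - 1 := by omega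
    have hx2' : x - 1 ≤ (GI1 I).n := by rw [hn1]; omega
    obtain ⟨u, hu, hurel, hule, humin⟩ := exists_decRootOf (GI1 I) hx1' hx2'
    have hu1' : 1 ≤ u := hu.1
    have hu1k : I.rel (u + 1) 1 := by
      rcases Nat.eq_or_lt_of_le hule with heq | hlt
      · have : u + 1 = x := by omega
        rw [this]; exact hrel
      · exact I.dec (by omega) (by omega) hrel
    refine ⟨u, hu, (G_f7 hn hu).mp hu1k, ?_⟩
    rcases Nat.eq_or_lt_of_le hule with heq | hlt
    · exact Or.inl heq.symm
    · exact Or.inr ⟨hlt, hurel⟩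
  · rintro ⟨u, hu, hcount, hw⟩
    have hu1k : I.rel (u + 1) 1 := (G_f7 hn hu).mpr hcount
    rcases hw with heq | ⟨hlt, hrel⟩
    · have : x = u + 1 := by omega
      rw [this]; exact hu1k
    · have : I.rel x (u + 1) := by
        have h' := (GI1_rel_iff.mp hrel).2.2.2.2
        have e : x - 1 + 1 = x := by omega
        rwa [e] at h'
      exact I.trans this hu1k

/-- reconstruction: every nonempty interval poset is a `G`-composition -/
theorem G_decomp {I : IPoset} (hn : 1 ≤ I.n) : (GI1 I).G (GI2 I) (Gr I) = I := by
  have hc := Gc_bounds hn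
  have hn1 : (GI1 I).n = Gc I - 2 := GI1_n hn
  have hn2 : (GI2 I).n = I.n + 1 - Gc I := GI2_n hn
  apply IPoset.ext'
  · rw [G_n, hn1, hn2]; omega
  intro x y
  constructor
  · intro h
    rcases h with ⟨rfl, rfl⟩ | ⟨h1, h2, h3, h4, h5⟩ | ⟨h1, h2, h3⟩ |
      ⟨h1, h2, h3, h4⟩ | ⟨h1, h2, h3, h4⟩
    · exact I.refl 1 le_rfl hn
    · -- inside GI1
      have h' := (GI1_rel_iff.mp h5).2.2.2.2
      have e1 : x - 1 + 1 = x := by omega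
      have e2 : y - 1 + 1 = y := by omega
      rwa [e1, e2] at h'
    · -- inside GI2
      rw [hn1] at h1 h2 h3
      have h' := (GI2_rel_iff.mp h3).2.2.2.2
      have e1 : x - (Gc I - 2 + 1) + (Gc I - 1) = x := by omega
      have e2 : y - (Gc I - 2 + 1) + (Gc I - 1) = y := by omega
      rwa [e1, e2] at h'
    · -- package into bottom
      rw [hn1] at h3
      rw [h1]
      exact (G_f6 hn h2 (by omega)).mpr h4
    · -- glue
      rw [hn1] at h2 h3 h4
      have h' := (GI2_rel_iff.mp h4).2.2.2.2
      have hb := rel_bounds h'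
      have e2 : y - (Gc I - 2 + 1) + (Gc I - 1) = y := by omega
      rw [e2] at h'
      have e1 : 1 + (Gc I - 1) = Gc I := by omega
      rw [e1] at h'
      exact (G_f5 (by omega) (by omega) (by omega) (by omega)).mpr h'
  · intro hrel
    have hb := rel_bounds hrel
    rcases Nat.lt_or_ge y (Gc I) with hyc | hyc
    · rcases Nat.lt_or_ge x (Gc I) with hxc | hxc
      · -- both below c
        rcases Nat.eq_or_lt_of_le hb.2.2.1 with hy1 | hy2
        · -- y = 1
          rcases Nat.eq_or_lt_of_le hb.1 with hx1 | hx2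
          · left; omega
          · right; right; right; left
            rw [hn1]
            refine ⟨hy1.symm, by omega, by omega, ?_⟩
            rw [← hy1] at hrel
            exact (G_f6 hn (by omega) hxc).mp hrel
        · -- 2 ≤ y < c
          rcases Nat.eq_or_lt_of_le hb.1 with hx1 | hx2
          · exfalso
            rw [← hx1] at hrel
            exact G_f1 (by omega) hyc (by omega) hrel
          · right; left
            rw [hn1]
            refine ⟨by omega, by omega, by omega, by omega, ?_⟩
            rw [GI1_rel_iff]
            have e1 : x - 1 + 1 = x := by omega
            have e2 : y - 1 + 1 = y := by omega
            rw [e1, e2]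
            exact ⟨by omega, by omega, by omega, by omega, hrel⟩
      · -- x ≥ c > y : impossible
        exfalso
        rcases Nat.eq_or_lt_of_le hb.2.2.1 with hy1 | hy2
        · exact G_f3 hn hxc hb.2.1 (by rw [← hy1] at hrel; exact hrel)
        · exact G_f4 hn (by omega) hyc hxc hb.2.1 hrel
    · rcases Nat.lt_or_ge x (Gc I) with hxc | hxc
      · -- glue case
        right; right; right; right
        rw [hn1]
        refine ⟨hb.1, by omega, by omega, ?_⟩
        rw [GI2_rel_iff]
        have hcy : I.rel (Gc I) y := (G_f5 hb.1 hxc hyc hb.2.2.2).mp hrel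
        have e1 : 1 + (Gc I - 1) = Gc I := by omega
        have e2 : y - (Gc I - 2 + 1) + (Gc I - 1) = y := by omega
        rw [e2]
        exact ⟨le_rfl, by omega, by omega, by omega, by rw [e1]; exact hcy⟩
      · -- both in GI2
        right; right; left
        rw [hn1]
        refine ⟨by omega, by omega, ?_⟩
        rw [GI2_rel_iff]
        have e1 : x - (Gc I - 2 + 1) + (Gc I - 1) = x := by omega
        have e2 : y - (Gc I - 2 + 1) + (Gc I - 1) = y := by omega
        rw [e1, e2]
        exact ⟨by omega, by omega, by omega, by omega, hrel⟩
-- ===== G uniqueness: decomposing a composition gives back the parts =====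

lemma Gc_eq_of {I : IPoset} {c : ℕ} (h2 : 2 ≤ c) (hcn : c ≤ I.n + 1)
    (hcin : c ≤ I.n → c ∈ Gcset I)
    (hmin : ∀ y, 2 ≤ y → y < c → y ∉ Gcset I) : Gc I = c := by
  rw [Gc]
  split_ifs with h
  · set m := (Gcset I).min' h with hm
    have hmem := mem_Gcset.mp ((Gcset I).min'_mem h)
    have hmc : c ≤ m := by
      by_contra hcon
      exact hmin m hmem.1 (by omega) ((Gcset I).min'_mem h)
    rcases Nat.lt_or_ge I.n c with hlt | hge
    · omega
    · have := (Gcset I).min'_le c (hcin hge)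
      omega
  · rcases Nat.lt_or_ge I.n c with hlt | hge
    · omega
    · exact absurd ⟨c, hcin hge⟩ h

lemma Grel_one {I1 I2 : IPoset} {r y : ℕ} (h2 : 2 ≤ y) (hy : y ≤ I1.n + 1) :
    ¬ Grel I1 I2 r 1 y := by
  rintro (⟨e1, e2⟩ | ⟨g1, g2, g3, g4, g5⟩ | ⟨g1, g2, g3⟩ | ⟨g1, g2, g3, g4⟩ |
    ⟨g1, g2, g3, g4⟩) <;> omega

lemma Gc_G (I1 I2 : IPoset) (r : ℕ) : Gc (I1.G I2 r) = I1.n + 2 := by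
  apply Gc_eq_of
  · omega
  · rw [G_n]; omega
  · intro hle
    rw [mem_Gcset]
    rw [G_n] at hle ⊢
    refine ⟨by omega, by omega, ?_⟩
    intro x h1 hx
    right; right; right; right
    refine ⟨h1, by omega, by omega, ?_⟩
    have e : I1.n + 2 - (I1.n + 1) = 1 := by omega
    rw [e]
    exact I2.refl 1 le_rfl (by omega)
  · intro y hy2 hyc hmem
    rw [mem_Gcset] at hmem
    exact Grel_one hy2 (by omega) (hmem.2.2 1 le_rfl (by omega))

lemma GI1_G (I1 I2 : IPoset) (r : ℕ) : GI1 (I1.G I2 r) = I1 := by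
  have hc := Gc_G I1 I2 r
  apply IPoset.ext'
  · show ((I1.G I2 r).restrict 1 (Gc (I1.G I2 r) - 2)).n = I1.n
    rw [hc]
    have : (1 : ℕ) + (I1.n + 2 - 2) ≤ (I1.G I2 r).n := by rw [G_n]; omega
    rw [restrict_n this]
    omega
  · intro a b
    rw [show (GI1 (I1.G I2 r)).rel a b ↔ _ from restrict_rel_iff, hc]
    constructor
    · rintro ⟨h1, h2, h3, h4, hrel⟩
      rcases hrel with ⟨e1, e2⟩ | ⟨g1, g2, g3, g4, g5⟩ | ⟨g1, g2, g3⟩ |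
        ⟨g1, g2, g3, g4⟩ | ⟨g1, g2, g3, g4⟩
      · omega
      · have ea : a + 1 - 1 = a := by omega
        have eb : b + 1 - 1 = b := by omega
        rwa [ea, eb] at g5
      · omega
      · omega
      · omega
    · intro hrel
      have hb := rel_bounds hrel
      refine ⟨by omega, by omega, by omega, by omega, ?_⟩
      right; left
      have ea : a + 1 - 1 = a := by omega
      have eb : b + 1 - 1 = b := by omega
      rw [ea, eb]
      exact ⟨by omega, by omega, by omega, by omega, hrel⟩

lemma GI2_G (I1 I2 : IPoset) (r : ℕ) : GI2 (I1.G I2 r) = I2 := by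
  have hc := Gc_G I1 I2 r
  have hgn : (I1.G I2 r).n = I1.n + I2.n + 1 := G_n I1 I2 r
  apply IPoset.ext'
  · show ((I1.G I2 r).restrict (Gc (I1.G I2 r) - 1) ((I1.G I2 r).n + 1 - Gc (I1.G I2 r))).n = I2.n
    rw [hc, hgn]
    have e : I1.n + I2.n + 1 + 1 - (I1.n + 2) = I2.n := by omega
    rw [e]
    have : I1.n + 2 - 1 + I2.n ≤ (I1.G I2 r).n := by rw [hgn]; omega
    rw [restrict_n this]
  · intro a b
    rw [show (GI2 (I1.G I2 r)).rel a b ↔ _ from restrict_rel_iff, hc, hgn]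
    have e : I1.n + I2.n + 1 + 1 - (I1.n + 2) = I2.n := by omega
    rw [e]
    have e2 : I1.n + 2 - 1 = I1.n + 1 := by omega
    rw [e2]
    constructor
    · rintro ⟨h1, h2, h3, h4, hrel⟩
      rcases hrel with ⟨e1, e2⟩ | ⟨g1, g2, g3, g4, g5⟩ | ⟨g1, g2, g3⟩ |
        ⟨g1, g2, g3, g4⟩ | ⟨g1, g2, g3, g4⟩
      · omega
      · omega
      · have ea : a + (I1.n + 1) - (I1.n + 1) = a := by omega
        have eb : b + (I1.n + 1) - (I1.n + 1) = b := by omega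
        rwa [ea, eb] at g3
      · omega
      · omega
    · intro hrel
      have hb := rel_bounds hrel
      refine ⟨by omega, by omega, by omega, by omega, ?_⟩
      right; right; left
      have ea : a + (I1.n + 1) - (I1.n + 1) = a := by omega
      have eb : b + (I1.n + 1) - (I1.n + 1) = b := by omega
      rw [ea, eb]
      exact ⟨by omega, by omega, hrel⟩

lemma Gr_G (I1 I2 : IPoset) {r : ℕ} (hr : r ≤ trees I1) : Gr (I1.G I2 r) = r := by
  classical
  rw [Gr, GI1_G I1 I2 r]
  have hfilter : (drootsF I1).filter (fun u => (I1.G I2 r).rel (u + 1) 1)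
      = (drootsF I1).filter (fun u => ((drootsF I1).filter (· ≤ u)).card ≤ r) := by
    apply Finset.filter_congr
    intro u hu
    rw [mem_drootsF] at hu
    have hu1 := hu.1
    have hu2 := hu.2.1
    have hiff : (I1.G I2 r).rel (u + 1) 1 ↔ DecPkg I1 r u := by
      constructor
      · rintro (⟨e1, e2⟩ | ⟨g1, g2, g3, g4, g5⟩ | ⟨g1, g2, g3⟩ |
          ⟨g1, g2, g3, g4⟩ | ⟨g1, g2, g3, g4⟩)
        · omega
        · omega
        · omega
        · have e : u + 1 - 1 = u := by omega
          rwa [e] at g4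
        · omega
      · intro hpkg
        right; right; right; left
        have e : u + 1 - 1 = u := by omega
        rw [e]
        exact ⟨rfl, by omega, by omega, hpkg⟩
    rw [hiff, decPkg_root_iff hu, dle_ncard]
  rw [hfilter]
  rw [trees_eq_card] at hr
  exact count_filter_le (drootsF I1) r hr

-- ===== D-decomposition =====

noncomputable def Dkset (I : IPoset) : Finset ℕ :=
  @Finset.filter _ (fun x => ∀ z, x < z → z ≤ I.n → I.rel z x)
    (fun _ => Classical.propDecidable _) (Finset.Icc 1 I.n)

noncomputable def Dk (I : IPoset) : ℕ :=
  if h : (Dkset I).Nonempty then (Dkset I).min' h else I.n + 1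

lemma mem_Dkset {I : IPoset} {x : ℕ} :
    x ∈ Dkset I ↔ (1 ≤ x ∧ x ≤ I.n ∧ ∀ z, x < z → z ≤ I.n → I.rel z x) := by
  unfold Dkset
  rw [@Finset.mem_filter _ _ (fun _ => Classical.propDecidable _), Finset.mem_Icc]
  tauto

lemma Dkset_nonempty {I : IPoset} (hn : 1 ≤ I.n) : (Dkset I).Nonempty :=
  ⟨I.n, mem_Dkset.mpr ⟨hn, le_rfl, fun z h1 h2 => by omega⟩⟩

lemma Dk_bounds {I : IPoset} (hn : 1 ≤ I.n) : 1 ≤ Dk I ∧ Dk I ≤ I.n := by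
  rw [Dk, dif_pos (Dkset_nonempty hn)]
  have := mem_Dkset.mp ((Dkset I).min'_mem (Dkset_nonempty hn))
  omega

lemma Dk_rel {I : IPoset} (hn : 1 ≤ I.n) :
    ∀ z, Dk I < z → z ≤ I.n → I.rel z (Dk I) := by
  rw [Dk, dif_pos (Dkset_nonempty hn)]
  exact (mem_Dkset.mp ((Dkset I).min'_mem (Dkset_nonempty hn))).2.2

lemma Dk_min {I : IPoset} (hn : 1 ≤ I.n) {x : ℕ} (h1 : 1 ≤ x) (hx : x < Dk I) :
    ∃ z, x < z ∧ z ≤ I.n ∧ ¬ I.rel z x := by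
  by_contra hcon
  push_neg at hcon
  have hxn : x ≤ I.n := by
    have := (Dk_bounds hn).2; omega
  have hmem : x ∈ Dkset I := mem_Dkset.mpr ⟨h1, hxn, hcon⟩
  rw [Dk, dif_pos (Dkset_nonempty hn)] at hx
  have := (Dkset I).min'_le x hmem
  omega

noncomputable def DJ1 (I : IPoset) : IPoset := I.restrict 0 (Dk I - 1)
noncomputable def DJ2 (I : IPoset) : IPoset := I.restrict (Dk I) (I.n - Dk I)

open scoped Classical in
noncomputable def Ds (I : IPoset) : ℕ :=
  ((irootsF (DJ1 I)).filter (fun u => I.rel u (Dk I))).card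

lemma DJ1_n {I : IPoset} (hn : 1 ≤ I.n) : (DJ1 I).n = Dk I - 1 := by
  have := Dk_bounds hn
  exact restrict_n (by omega)

lemma DJ2_n {I : IPoset} (hn : 1 ≤ I.n) : (DJ2 I).n = I.n - Dk I := by
  have := Dk_bounds hn
  exact restrict_n (by omega)

lemma DJ1_rel_iff {I : IPoset} {a b : ℕ} :
    (DJ1 I).rel a b ↔ (1 ≤ a ∧ a ≤ Dk I - 1 ∧ 1 ≤ b ∧ b ≤ Dk I - 1 ∧ I.rel a b) := by
  rw [show (DJ1 I).rel a b ↔ _ from restrict_rel_iff]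
  simp only [Nat.add_zero]

lemma DJ2_rel_iff {I : IPoset} {a b : ℕ} :
    (DJ2 I).rel a b ↔ (1 ≤ a ∧ a ≤ I.n - Dk I ∧ 1 ≤ b ∧ b ≤ I.n - Dk I ∧
      I.rel (a + Dk I) (b + Dk I)) := Iff.rfl

lemma D_g3 {I : IPoset} (hn : 1 ≤ I.n) {x : ℕ} (h1 : 1 ≤ x) (hx : x < Dk I) :
    ¬ I.rel (Dk I) x := by
  intro hrel
  obtain ⟨z, hz1, hz2, hz3⟩ := Dk_min hn h1 hx
  apply hz3
  rcases lt_trichotomy z (Dk I) with hlt | heq | hgt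
  · exact I.dec hz1 hlt hrel
  · rw [heq]; exact hrel
  · exact I.trans (Dk_rel hn z hgt hz2) hrel

lemma D_g4 {I : IPoset} (hn : 1 ≤ I.n) {x z : ℕ} (h1 : 1 ≤ x) (hx : x < Dk I)
    (hz : Dk I < z) (hzn : z ≤ I.n) : ¬ I.rel z x := fun hrel =>
  D_g3 hn h1 hx (I.dec hx hz hrel)

lemma D_g5 {I : IPoset} (hn : 1 ≤ I.n) {x z : ℕ} (h1 : 1 ≤ x) (hx : x < Dk I)
    (hz : Dk I < z) (hzn : z ≤ I.n) : ¬ I.rel x z := by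
  intro hrel
  have h1' : I.rel (Dk I) z := I.inc hx hz hrel
  have h2' : I.rel z (Dk I) := Dk_rel hn z hz hzn
  have := I.antisymm h1' h2'
  omega

lemma D_g6 {I : IPoset} (hn : 1 ≤ I.n) {z : ℕ} (hz : Dk I < z) (hzn : z ≤ I.n) :
    ¬ I.rel (Dk I) z := by
  intro hrel
  have := I.antisymm hrel (Dk_rel hn z hz hzn)
  omega

lemma D_f7 {I : IPoset} (hn : 1 ≤ I.n) {u : ℕ} (hu : IsIncRoot (DJ1 I) u) :
    I.rel u (Dk I) ↔ Set.ncard {z | IsIncRoot (DJ1 I) z ∧ u ≤ z} ≤ Ds I := by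
  classical
  have hn1 : (DJ1 I).n = Dk I - 1 := DJ1_n hn
  have hdc : ∀ u' ∈ irootsF (DJ1 I),
      ∀ u ∈ (irootsF (DJ1 I)).filter (fun v => I.rel v (Dk I)), u ≤ u' →
        u' ∈ (irootsF (DJ1 I)).filter (fun v => I.rel v (Dk I)) := by
    intro u' hu' u0 hu0 hle
    rw [Finset.mem_filter] at hu0 ⊢
    refine ⟨hu', ?_⟩
    rcases Nat.eq_or_lt_of_le hle with heq | hlt
    · rw [← heq]; exact hu0.2
    · have hub := (mem_irootsF.mp hu').2.1
      rw [hn1] at hub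
      exact I.inc hlt (by omega) hu0.2
  have := mem_of_upclosed (Finset.filter_subset _ _) hdc (mem_irootsF.mpr hu)
  rw [ileSet_ncard]
  constructor
  · intro hrel
    exact this.mp (Finset.mem_filter.mpr ⟨mem_irootsF.mpr hu, hrel⟩)
  · intro hc
    exact (Finset.mem_filter.mp (this.mpr hc)).2

lemma D_f6 {I : IPoset} (hn : 1 ≤ I.n) {x : ℕ} (h1 : 1 ≤ x) (hx : x < Dk I) :
    I.rel x (Dk I) ↔ IncPkg (DJ1 I) (Ds I) x := by
  have hk := Dk_bounds hn
  have hn1 : (DJ1 I).n = Dk I - 1 := DJ1_n hn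
  constructor
  · intro hrel
    have hx1' : x ≤ (DJ1 I).n := by rw [hn1]; omega
    obtain ⟨u, hu, hurel, hule, humax⟩ := exists_incRootOf (DJ1 I) h1 hx1'
    have hub : u ≤ Dk I - 1 := by rw [← hn1]; exact hu.2.1
    have huk : I.rel u (Dk I) := by
      rcases Nat.eq_or_lt_of_le hule with heq | hlt
      · rw [heq] at hrel; exact hrel
      · exact I.inc hlt (by omega) hrel
    refine ⟨u, hu, (D_f7 hn hu).mp huk, ?_⟩
    rcases Nat.eq_or_lt_of_le hule with heq | hlt
    · exact Or.inl heq
    · exact Or.inr ⟨hlt, hurel⟩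
  · rintro ⟨u, hu, hcount, hw⟩
    have huk : I.rel u (Dk I) := (D_f7 hn hu).mpr hcount
    rcases hw with rfl | ⟨hlt, hrel⟩
    · exact huk
    · exact I.trans (DJ1_rel_iff.mp hrel).2.2.2.2 huk

theorem D_decomp {I : IPoset} (hn : 1 ≤ I.n) : (DJ1 I).D (DJ2 I) (Ds I) = I := by
  have hk := Dk_bounds hn
  have hn1 : (DJ1 I).n = Dk I - 1 := DJ1_n hn
  have hn2 : (DJ2 I).n = I.n - Dk I := DJ2_n hn
  apply IPoset.ext'
  · rw [D_n, hn1, hn2]; omega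
  intro x y
  constructor
  · intro h
    rcases h with ⟨h1, h2, h3, h4, h5⟩ | ⟨h1, h2, h3⟩ | ⟨h1, h2⟩ |
      ⟨h1, h2, h3⟩ | ⟨h1, h2, h3, h4⟩
    · exact (DJ1_rel_iff.mp h5).2.2.2.2
    · rw [hn1] at h1 h2 h3
      have h' := (DJ2_rel_iff.mp h3).2.2.2.2
      have e1 : x - (Dk I - 1 + 1) + Dk I = x := by omega
      have e2 : y - (Dk I - 1 + 1) + Dk I = y := by omega
      rwa [e1, e2] at h'
    · rw [hn1] at h1 h2
      have ex : x = Dk I := by omega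
      have ey : y = Dk I := by omega
      rw [ex, ey]
      exact I.refl (Dk I) (by omega) (by omega)
    · rw [hn1] at h1 h2 h3
      rw [hn2] at h3
      have ey : y = Dk I := by omega
      rw [ey]
      exact Dk_rel hn x (by omega) (by omega)
    · rw [hn1] at h1 h3
      have ey : y = Dk I := by omega
      rw [ey]
      exact (D_f6 hn (by omega) (by omega)).mpr h4
  · intro hrel
    have hb := rel_bounds hrel
    rcases lt_trichotomy y (Dk I) with hyk | hyk | hyk
    · rcases lt_trichotomy x (Dk I) with hxk | hxk | hxk
      · left
        rw [hn1]
        refine ⟨hb.1, by omega, hb.2.2.1, by omega, ?_⟩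
        rw [DJ1_rel_iff]
        exact ⟨hb.1, by omega, hb.2.2.1, by omega, hrel⟩
      · exfalso
        rw [hxk] at hrel
        exact D_g3 hn hb.2.2.1 hyk hrel
      · exact absurd hrel (D_g4 hn hb.2.2.1 hyk hxk hb.2.1)
    · rcases lt_trichotomy x (Dk I) with hxk | hxk | hxk
      · right; right; right; right
        rw [hn1]
        refine ⟨by omega, hb.1, by omega, ?_⟩
        rw [hyk] at hrel
        exact (D_f6 hn hb.1 hxk).mp hrel
      · right; right; left
        rw [hn1]; omega
      · right; right; right; left
        rw [hn1, hn2]; omega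
    · rcases lt_trichotomy x (Dk I) with hxk | hxk | hxk
      · exact absurd hrel (D_g5 hn hb.1 hxk hyk hb.2.2.2)
      · exfalso
        rw [hxk] at hrel
        exact D_g6 hn hyk hb.2.2.2 hrel
      · right; left
        rw [hn1]
        refine ⟨by omega, by omega, ?_⟩
        rw [DJ2_rel_iff]
        have e1 : x - (Dk I - 1 + 1) + Dk I = x := by omega
        have e2 : y - (Dk I - 1 + 1) + Dk I = y := by omega
        rw [e1, e2]
        exact ⟨by omega, by omega, by omega, by omega, hrel⟩

-- D uniqueness

lemma Dk_eq_of {I : IPoset} (hn : 1 ≤ I.n) {k : ℕ} (h1 : 1 ≤ k) (hkn : k ≤ I.n)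
    (hkin : k ∈ Dkset I)
    (hmin : ∀ x, 1 ≤ x → x < k → x ∉ Dkset I) : Dk I = k := by
  rw [Dk, dif_pos (Dkset_nonempty hn)]
  set m := (Dkset I).min' (Dkset_nonempty hn) with hm
  have hmem := mem_Dkset.mp ((Dkset I).min'_mem (Dkset_nonempty hn))
  have hmk : k ≤ m := by
    by_contra hcon
    exact hmin m hmem.1 (by omega) ((Dkset I).min'_mem (Dkset_nonempty hn))
  have := (Dkset I).min'_le k hkin
  omega

lemma Dk_D (J1 J2 : IPoset) (s : ℕ) : Dk (J1.D J2 s) = J1.n + 1 := by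
  have hdn : (J1.D J2 s).n = J1.n + J2.n + 1 := D_n J1 J2 s
  apply Dk_eq_of
  · rw [hdn]; omega
  · omega
  · rw [hdn]; omega
  · rw [mem_Dkset, hdn]
    refine ⟨by omega, by omega, ?_⟩
    intro z hz1 hz2
    right; right; right; left
    exact ⟨rfl, hz1, by omega⟩
  · intro x hx1 hx2 hmem
    rw [mem_Dkset, hdn] at hmem
    have := hmem.2.2 (J1.n + 1) (by omega) (by omega)
    rcases this with ⟨g1, g2, g3, g4, g5⟩ | ⟨g1, g2, g3⟩ | ⟨g1, g2⟩ |
      ⟨g1, g2, g3⟩ | ⟨g1, g2, g3, g4⟩ <;> omega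

lemma DJ1_D (J1 J2 : IPoset) (s : ℕ) : DJ1 (J1.D J2 s) = J1 := by
  have hk := Dk_D J1 J2 s
  have hdn : (J1.D J2 s).n = J1.n + J2.n + 1 := D_n J1 J2 s
  apply IPoset.ext'
  · show ((J1.D J2 s).restrict 0 (Dk (J1.D J2 s) - 1)).n = J1.n
    rw [hk]
    have e : J1.n + 1 - 1 = J1.n := by omega
    rw [e]
    rw [restrict_n (by rw [hdn]; omega)]
  · intro a b
    rw [show (DJ1 (J1.D J2 s)).rel a b ↔ _ from restrict_rel_iff, hk]
    simp only [Nat.add_zero]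
    have e : J1.n + 1 - 1 = J1.n := by omega
    rw [e]
    constructor
    · rintro ⟨h1, h2, h3, h4, hrel⟩
      rcases hrel with ⟨g1, g2, g3, g4, g5⟩ | ⟨g1, g2, g3⟩ | ⟨g1, g2⟩ |
        ⟨g1, g2, g3⟩ | ⟨g1, g2, g3, g4⟩
      · exact g5
      · omega
      · omega
      · omega
      · omega
    · intro hrel
      have hb := rel_bounds hrel
      exact ⟨hb.1, hb.2.1, hb.2.2.1, hb.2.2.2, Or.inl ⟨hb.1, hb.2.1, hb.2.2.1, hb.2.2.2, hrel⟩⟩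

lemma DJ2_D (J1 J2 : IPoset) (s : ℕ) : DJ2 (J1.D J2 s) = J2 := by
  have hk := Dk_D J1 J2 s
  have hdn : (J1.D J2 s).n = J1.n + J2.n + 1 := D_n J1 J2 s
  apply IPoset.ext'
  · show ((J1.D J2 s).restrict (Dk (J1.D J2 s)) ((J1.D J2 s).n - Dk (J1.D J2 s))).n = J2.n
    rw [hk, hdn]
    have e : J1.n + J2.n + 1 - (J1.n + 1) = J2.n := by omega
    rw [e]
    rw [restrict_n (by rw [hdn]; omega)]
  · intro a b
    rw [show (DJ2 (J1.D J2 s)).rel a b ↔ _ from restrict_rel_iff, hk, hdn]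
    have e : J1.n + J2.n + 1 - (J1.n + 1) = J2.n := by omega
    rw [e]
    constructor
    · rintro ⟨h1, h2, h3, h4, hrel⟩
      rcases hrel with ⟨g1, g2, g3, g4, g5⟩ | ⟨g1, g2, g3⟩ | ⟨g1, g2⟩ |
        ⟨g1, g2, g3⟩ | ⟨g1, g2, g3, g4⟩
      · omega
      · have ea : a + (J1.n + 1) - (J1.n + 1) = a := by omega
        have eb : b + (J1.n + 1) - (J1.n + 1) = b := by omega
        rwa [ea, eb] at g3
      · omega
      · omega
      · omega
    · intro hrel
      have hb := rel_bounds hrel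
      refine ⟨hb.1, hb.2.1, hb.2.2.1, hb.2.2.2, ?_⟩
      right; left
      have ea : a + (J1.n + 1) - (J1.n + 1) = a := by omega
      have eb : b + (J1.n + 1) - (J1.n + 1) = b := by omega
      rw [ea, eb]
      exact ⟨by omega, by omega, hrel⟩

lemma Ds_D (J1 J2 : IPoset) {s : ℕ} (hs : s ≤ itrees J1) : Ds (J1.D J2 s) = s := by
  classical
  rw [Ds, DJ1_D J1 J2 s, Dk_D J1 J2 s]
  have hfilter : (irootsF J1).filter (fun u => (J1.D J2 s).rel u (J1.n + 1))
      = (irootsF J1).filter (fun u => ((irootsF J1).filter (u ≤ ·)).card ≤ s) := by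
    apply Finset.filter_congr
    intro u hu
    rw [mem_irootsF] at hu
    have hu1 := hu.1
    have hu2 := hu.2.1
    have hiff : (J1.D J2 s).rel u (J1.n + 1) ↔ IncPkg J1 s u := by
      constructor
      · rintro (⟨g1, g2, g3, g4, g5⟩ | ⟨g1, g2, g3⟩ | ⟨g1, g2⟩ |
          ⟨g1, g2, g3⟩ | ⟨g1, g2, g3, g4⟩)
        · omega
        · omega
        · omega
        · omega
        · exact g4
      · intro hpkg
        right; right; right; right
        exact ⟨rfl, hu1, hu2, hpkg⟩
    rw [hiff, incPkg_root_iff hu, ileSet_ncard]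
  rw [hfilter]
  exact count_filter_ge (irootsF J1) s hs

-- ===== size lemmas =====

lemma GI1_lt {I : IPoset} (hn : 1 ≤ I.n) : (GI1 I).n < I.n := by
  rw [GI1_n hn]; have := Gc_bounds hn; omega

lemma GI2_lt {I : IPoset} (hn : 1 ≤ I.n) : (GI2 I).n < I.n := by
  rw [GI2_n hn]; have := Gc_bounds hn; omega

lemma DJ1_lt {I : IPoset} (hn : 1 ≤ I.n) : (DJ1 I).n < I.n := by
  rw [DJ1_n hn]; have := Dk_bounds hn; omega

lemma DJ2_lt {I : IPoset} (hn : 1 ≤ I.n) : (DJ2 I).n < I.n := by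
  rw [DJ2_n hn]; have := Dk_bounds hn; omega

lemma Gr_le (I : IPoset) : Gr I ≤ trees (GI1 I) := by
  rw [trees_eq_card]; exact Finset.card_filter_le _ _

lemma Ds_le (I : IPoset) : Ds I ≤ itrees (DJ1 I) := by
  rw [itrees]; exact Finset.card_filter_le _ _

lemma sizes_G {I : IPoset} (hn : 1 ≤ I.n) : (GI1 I).n + (GI2 I).n + 1 = I.n := by
  rw [GI1_n hn, GI2_n hn]; have := Gc_bounds hn; omega

lemma sizes_D {I : IPoset} (hn : 1 ≤ I.n) : (DJ1 I).n + (DJ2 I).n + 1 = I.n := by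
  rw [DJ1_n hn, DJ2_n hn]; have := Dk_bounds hn; omega

lemma trees_zero {I : IPoset} (h : I.n = 0) : trees I = 0 := by
  rw [trees_eq_card, Finset.card_eq_zero]
  ext x
  simp only [mem_drootsF, Finset.notMem_empty, iff_false]
  intro hx
  have := hx.2.1; have := hx.1; omega

lemma itrees_zero {I : IPoset} (h : I.n = 0) : itrees I = 0 := by
  rw [itrees, Finset.card_eq_zero]
  ext x
  simp only [mem_irootsF, Finset.notMem_empty, iff_false]
  intro hx
  have := hx.2.1; have := hx.1; omega

-- ===== the recursive bijections =====

noncomputable def fmap (I : IPoset) : IPoset :=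
  if h : I.n = 0 then I
  else (fmap (GI1 I)).D (fmap (GI2 I)) (Gr I)
termination_by I.n
decreasing_by
  · exact GI1_lt (by omega)
  · exact GI2_lt (by omega)

noncomputable def gmap (J : IPoset) : IPoset :=
  if h : J.n = 0 then J
  else (gmap (DJ1 J)).G (gmap (DJ2 J)) (Ds J)
termination_by J.n
decreasing_by
  · exact DJ1_lt (by omega)
  · exact DJ2_lt (by omega)

theorem fmap_spec (I : IPoset) :
    (fmap I).n = I.n ∧ itrees (fmap I) = trees I ∧ trees (fmap I) = ir I := by
  suffices h : ∀ N, ∀ I : IPoset, I.n = N →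
      (fmap I).n = I.n ∧ itrees (fmap I) = trees I ∧ trees (fmap I) = ir I by
    exact h I.n I rfl
  intro N
  induction N using Nat.strong_induction_on with
  | _ N ih0 =>
  intro I hN
  subst hN
  have ih : ∀ m, m < I.n → ∀ J : IPoset, J.n = m →
      (fmap J).n = J.n ∧ itrees (fmap J) = trees J ∧ trees (fmap J) = ir J := ih0
  rcases Nat.eq_zero_or_pos I.n with h0 | hpos
  · rw [fmap, dif_pos h0]
    rw [trees_zero h0, itrees_zero h0, ir_zero h0]
    exact ⟨rfl, rfl, rfl⟩
  · have hne : ¬ I.n = 0 := by omega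
    rw [fmap, dif_neg hne]
    have ih1 := ih (GI1 I).n (GI1_lt hpos) (GI1 I) rfl
    have ih2 := ih (GI2 I).n (GI2_lt hpos) (GI2 I) rfl
    have hr1 : Gr I ≤ itrees (fmap (GI1 I)) := by
      rw [ih1.2.1]; exact Gr_le I
    have hI : (GI1 I).G (GI2 I) (Gr I) = I := G_decomp hpos
    constructor
    · rw [D_n, ih1.1, ih2.1]
      exact sizes_G hpos
    constructor
    · rw [itrees_D hr1, ih1.2.1, ih2.2.1]
      conv_rhs => rw [← hI]
      rw [trees_G (Gr_le I)]
      have := Gr_le I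
      omega
    · rw [trees_D, ih1.2.2]
      conv_rhs => rw [← hI]
      rw [ir_G]

theorem gmap_spec (J : IPoset) :
    (gmap J).n = J.n ∧ trees (gmap J) = itrees J ∧ ir (gmap J) = trees J := by
  suffices h : ∀ N, ∀ J : IPoset, J.n = N →
      (gmap J).n = J.n ∧ trees (gmap J) = itrees J ∧ ir (gmap J) = trees J by
    exact h J.n J rfl
  intro N
  induction N using Nat.strong_induction_on with
  | _ N ih0 =>
  intro J hN
  subst hN
  have ih : ∀ m, m < J.n → ∀ K : IPoset, K.n = m →
      (gmap K).n = K.n ∧ trees (gmap K) = itrees K ∧ ir (gmap K) = trees K := ih0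
  rcases Nat.eq_zero_or_pos J.n with h0 | hpos
  · rw [gmap, dif_pos h0]
    rw [trees_zero h0, itrees_zero h0, ir_zero h0]
    exact ⟨rfl, rfl, rfl⟩
  · have hne : ¬ J.n = 0 := by omega
    rw [gmap, dif_neg hne]
    have ih1 := ih (DJ1 J).n (DJ1_lt hpos) (DJ1 J) rfl
    have ih2 := ih (DJ2 J).n (DJ2_lt hpos) (DJ2 J) rfl
    have hs1 : Ds J ≤ trees (gmap (DJ1 J)) := by
      rw [ih1.2.1]; exact Ds_le J
    have hJ : (DJ1 J).D (DJ2 J) (Ds J) = J := D_decomp hpos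
    constructor
    · rw [G_n, ih1.1, ih2.1]
      exact sizes_D hpos
    constructor
    · rw [trees_G hs1, ih1.2.1, ih2.2.1]
      conv_rhs => rw [← hJ]
      rw [itrees_D (Ds_le J)]
      have := Ds_le J
      omega
    · rw [ir_G, ih1.2.2]
      conv_rhs => rw [← hJ]
      rw [trees_D]

theorem gmap_fmap (I : IPoset) : gmap (fmap I) = I := by
  suffices h : ∀ N, ∀ I : IPoset, I.n = N → gmap (fmap I) = I by
    exact h I.n I rfl
  intro N
  induction N using Nat.strong_induction_on with
  | _ N ih0 =>
  intro I hN
  subst hN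
  have ih : ∀ m, m < I.n → ∀ J : IPoset, J.n = m → gmap (fmap J) = J := ih0
  rcases Nat.eq_zero_or_pos I.n with h0 | hpos
  · rw [fmap, dif_pos h0, gmap, dif_pos h0]
  · have hne : ¬ I.n = 0 := by omega
    rw [fmap, dif_neg hne]
    have hfn : ((fmap (GI1 I)).D (fmap (GI2 I)) (Gr I)).n = I.n := by
      rw [D_n, (fmap_spec (GI1 I)).1, (fmap_spec (GI2 I)).1]
      exact sizes_G hpos
    rw [gmap, dif_neg (by omega)]
    have hr1 : Gr I ≤ itrees (fmap (GI1 I)) := by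
      rw [(fmap_spec (GI1 I)).2.1]; exact Gr_le I
    rw [DJ1_D, DJ2_D, Ds_D _ _ hr1]
    rw [ih (GI1 I).n (GI1_lt hpos) (GI1 I) rfl,
        ih (GI2 I).n (GI2_lt hpos) (GI2 I) rfl]
    exact G_decomp hpos

theorem fmap_gmap (J : IPoset) : fmap (gmap J) = J := by
  suffices h : ∀ N, ∀ J : IPoset, J.n = N → fmap (gmap J) = J by
    exact h J.n J rfl
  intro N
  induction N using Nat.strong_induction_on with
  | _ N ih0 =>
  intro J hN
  subst hN
  have ih : ∀ m, m < J.n → ∀ K : IPoset, K.n = m → fmap (gmap K) = K := ih0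
  rcases Nat.eq_zero_or_pos J.n with h0 | hpos
  · rw [gmap, dif_pos h0, fmap, dif_pos h0]
  · have hne : ¬ J.n = 0 := by omega
    rw [gmap, dif_neg hne]
    have hgn : ((gmap (DJ1 J)).G (gmap (DJ2 J)) (Ds J)).n = J.n := by
      rw [G_n, (gmap_spec (DJ1 J)).1, (gmap_spec (DJ2 J)).1]
      exact sizes_D hpos
    rw [fmap, dif_neg (by omega)]
    have hs1 : Ds J ≤ trees (gmap (DJ1 J)) := by
      rw [(gmap_spec (DJ1 J)).2.1]; exact Ds_le J
    rw [GI1_G, GI2_G, Gr_G _ _ hs1]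
    rw [ih (DJ1 J).n (DJ1_lt hpos) (DJ1 J) rfl,
        ih (DJ2 J).n (DJ2_lt hpos) (DJ2 J) rfl]
    exact D_decomp hpos

-- ===== the rise-contact involution =====

noncomputable def hmap (I : IPoset) : IPoset := gmap ((fmap I).mirror)

lemma hmap_n (I : IPoset) : (hmap I).n = I.n := by
  rw [hmap, (gmap_spec _).1, mirror_n, (fmap_spec I).1]

lemma trees_hmap (I : IPoset) : trees (hmap I) = ir I := by
  rw [hmap, (gmap_spec _).2.1, itrees_mirror, (fmap_spec I).2.2]

lemma ir_hmap (I : IPoset) : ir (hmap I) = trees I := by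
  rw [hmap, (gmap_spec _).2.2, trees_mirror, (fmap_spec I).2.1]

lemma hmap_hmap (I : IPoset) : hmap (hmap I) = I := by
  rw [hmap, hmap, fmap_gmap, mirror_mirror, gmap_fmap]


/-- The relation of the lower-contacts composition `LC(I₁, I₂, r)`: shifted
concatenation of `I₁`, a new vertex `k = n₁ + 1`, and `I₂`, where every vertex
of `I₁` precedes `k` and the vertices below one of the `r` smallest roots of
the final forest of `I₂` precede `k`. -/
def LCrel (I1 I2 : IPoset) (r : ℕ) : ℕ → ℕ → Prop := fun x y =>
  let k := I1.n + 1
  (x ≤ I1.n ∧ y ≤ I1.n ∧ I1.rel x y) ∨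
  (k < x ∧ k < y ∧ I2.rel (x - k) (y - k)) ∨
  (x = k ∧ y = k) ∨
  (y = k ∧ 1 ≤ x ∧ x ≤ I1.n) ∨
  (y = k ∧ k < x ∧ x ≤ k + I2.n ∧
    ∃ s, IsDecRoot I2 s ∧ Set.ncard {z | IsDecRoot I2 z ∧ z ≤ s} ≤ r ∧
      (x - k = s ∨ (s < x - k ∧ I2.rel (x - k) s)))


/-- The joint distribution of `(trees, ir)` on interval-posets is symmetric:
for all `n, a, b`, the number of interval-posets of size `n` with
`trees I = a` and `ir I = b` equals the number with `trees I = b` and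
`ir I = a`. -/
theorem trees_ir_symmetric_distribution (n a b : ℕ) :
    Nat.card {I : IPoset // I.n = n ∧ trees I = a ∧ ir I = b} =
      Nat.card {I : IPoset // I.n = n ∧ trees I = b ∧ ir I = a} := by
  apply Nat.card_congr
  exact {
    toFun := fun p => ⟨hmap p.1, by
      obtain ⟨hn, ht, hi⟩ := p.2
      exact ⟨by rw [hmap_n, hn], by rw [trees_hmap, hi], by rw [ir_hmap, ht]⟩⟩
    invFun := fun p => ⟨hmap p.1, by
      obtain ⟨hn, ht, hi⟩ := p.2
      exact ⟨by rw [hmap_n, hn], by rw [trees_hmap, hi], by rw [ir_hmap, ht]⟩⟩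
    left_inv := fun p => Subtype.ext (hmap_hmap p.1)
    right_inv := fun p => Subtype.ext (hmap_hmap p.1) }
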